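/- arXiv:math/0006227 — 6 statements merged into one kernel-verified Lean document; each statement's English description precedes it below -/
import Mathlib

section
/- Let α and s be nonzero complex numbers with s not a root of unity, and let λ be a partition with conjugate partition λ^∨. Define d'_λ(i,j) = λ_i + λ_j − i − j + 1 if i < j and d'_λ(i,j) = −λ^∨_i − λ^∨_j + i + j − 1 if i ≥ j. Then Wenzl's quantum dimension evaluated at the parameters (α², s²) satisfies ⟨λ⟩_{α²,s²} = ∏_{(i,j)∈λ} (α s^{d_λ(i,j)} − α^{−1} s^{−d_λ(i,j)})/(s^{hl(i,j)} − s^{−hl(i,j)}) · ∏_{(i,j)∈λ} (α s^{d'_λ(i,j)} + α^{−1} s^{−d'_λ(i,j)})/(s^{hl(i,j)} + s^{−hl(i,j)}), where both products run over all cells (i,j) of λ. -/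
open Finset

/-- Quantum integer `[m] = (s^m - s^{-m})/(s - s⁻¹)`. -/
noncomputable def qint (s : ℂ) (m : ℤ) : ℂ := (s ^ m - s ^ (-m)) / (s - s⁻¹)

/-- Quantum integer `[m]_α = (α s^m - α⁻¹ s^{-m})/(s - s⁻¹)`. -/
noncomputable def qintA (α s : ℂ) (m : ℤ) : ℂ := (α * s ^ m - α⁻¹ * s ^ (-m)) / (s - s⁻¹)

/-- The cells `(i,j)` (row `i`, column `j`, both 1-based) of the Young diagram of
the partition `lam`, assuming all parts of index `> N` vanish. -/
def cells (lam : ℕ → ℕ) (N : ℕ) : Finset (ℕ × ℕ) :=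
  (Finset.Icc 1 N ×ˢ Finset.Icc 1 (lam 1)).filter (fun p => p.2 ≤ lam p.1)

/-- Hook length `hl(i,j) = λ_i + λ^∨_j - i - j + 1`. -/
def hookl (lam lamV : ℕ → ℕ) (p : ℕ × ℕ) : ℤ :=
  (lam p.1 : ℤ) + (lamV p.2 : ℤ) - p.1 - p.2 + 1

/-- `d_λ(i,j)`: equals `λ_i + λ_j - i - j + 1` if `i ≤ j`, and
`-λ^∨_i - λ^∨_j + i + j - 1` if `i > j`. -/
def dcell (lam lamV : ℕ → ℕ) (p : ℕ × ℕ) : ℤ :=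
  if p.1 ≤ p.2 then (lam p.1 : ℤ) + (lam p.2 : ℤ) - p.1 - p.2 + 1
  else -(lamV p.1 : ℤ) - (lamV p.2 : ℤ) + p.1 + p.2 - 1

/-- `d'_λ(i,j)`: equals `λ_i + λ_j - i - j + 1` if `i < j`, and
`-λ^∨_i - λ^∨_j + i + j - 1` if `i ≥ j`. -/
def dcell' (lam lamV : ℕ → ℕ) (p : ℕ × ℕ) : ℤ :=
  if p.1 < p.2 then (lam p.1 : ℤ) + (lam p.2 : ℤ) - p.1 - p.2 + 1
  else -(lamV p.1 : ℤ) - (lamV p.2 : ℤ) + p.1 + p.2 - 1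

/-- Wenzl's quantum dimension
`⟨λ⟩_{α,s} = ∏_{(j,j)∈λ} ([λ_j - λ^∨_j]_α + [hl(j,j)])/[hl(j,j)] ·
∏_{(i,j)∈λ, i≠j} [d_λ(i,j)]_α/[hl(i,j)]`. -/
noncomputable def wenzl (α s : ℂ) (lam lamV : ℕ → ℕ) (N : ℕ) : ℂ :=
  (∏ p ∈ (cells lam N).filter (fun p => p.1 = p.2),
      (qintA α s ((lam p.1 : ℤ) - (lamV p.1 : ℤ)) + qint s (hookl lam lamV p)) /
        qint s (hookl lam lamV p)) *
  ∏ p ∈ (cells lam N).filter (fun p => p.1 ≠ p.2),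
      qintA α s (dcell lam lamV p) / qint s (hookl lam lamV p)


section WenzlAux

lemma szpow_ne_one (s : ℂ) (hroot : ∀ m : ℕ, 0 < m → s ^ m ≠ 1) (n : ℤ) (hn : n ≠ 0) :
    s ^ n ≠ 1 := by
  rcases lt_or_gt_of_ne hn with h | h
  · intro hc
    have h1 : s ^ (-n) ≠ 1 := by
      have := hroot (-n).toNat (by omega)
      rwa [← zpow_natCast, Int.toNat_of_nonneg (by omega)] at this
    apply h1
    rw [zpow_neg, hc, inv_one]
  · have := hroot n.toNat (by omega)
    rwa [← zpow_natCast, Int.toNat_of_nonneg (by omega)] at this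

lemma ssub_ne (s : ℂ) (hs : s ≠ 0) (hroot : ∀ m : ℕ, 0 < m → s ^ m ≠ 1) (n : ℤ) (hn : n ≠ 0) :
    s ^ n - s ^ (-n) ≠ 0 := by
  have h0 : s ^ n - s ^ (-n) = s ^ (-n) * (s ^ (2*n) - 1) := by
    rw [mul_sub, ← zpow_add₀ hs, show -n + 2*n = n by ring, mul_one]
  rw [h0]
  exact mul_ne_zero (zpow_ne_zero _ hs)
    (sub_ne_zero.mpr (szpow_ne_one s hroot (2*n) (by omega)))

lemma sadd_ne (s : ℂ) (hs : s ≠ 0) (hroot : ∀ m : ℕ, 0 < m → s ^ m ≠ 1) (n : ℤ) (hn : n ≠ 0) :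
    s ^ n + s ^ (-n) ≠ 0 := by
  have h0 : s ^ n + s ^ (-n) = s ^ (-n) * (s ^ (2*n) + 1) := by
    rw [mul_add, ← zpow_add₀ hs, show -n + 2*n = n by ring, mul_one]
  rw [h0]
  refine mul_ne_zero (zpow_ne_zero _ hs) ?_
  intro hc
  have h2 : s ^ (2*n) = -1 := by linear_combination hc
  have h4 : s ^ (4*n) = 1 := by
    rw [show 4*n = 2*n + 2*n by ring, zpow_add₀ hs, h2]; ring
  exact szpow_ne_one s hroot (4*n) (by omega) h4

lemma sq_zpow (s : ℂ) (k : ℤ) : (s^2 : ℂ) ^ k = s ^ (2*k) := by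
  rw [← zpow_natCast s 2, ← zpow_mul]
  norm_num

lemma cell_core (a u v W : ℂ) (ha : a ≠ 0) (hu : u ≠ 0) (hv : v ≠ 0) (hW : W ≠ 0)
    (hvm : v - v⁻¹ ≠ 0) (hvp : v + v⁻¹ ≠ 0) :
    (a^2 * (u*u) - (a^2)⁻¹ * (u⁻¹*u⁻¹)) / W / ((v*v - v⁻¹*v⁻¹) / W) =
      ((a*u - a⁻¹*u⁻¹)/(v - v⁻¹)) * ((a*u + a⁻¹*u⁻¹)/(v + v⁻¹)) := by
  have hB : v*v - v⁻¹*v⁻¹ ≠ 0 := by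
    have h : v*v - v⁻¹*v⁻¹ = (v - v⁻¹)*(v + v⁻¹) := by ring
    rw [h]; exact mul_ne_zero hvm hvp
  rw [div_div_div_cancel_right₀ hW, div_mul_div_comm,
    div_eq_div_iff hB (mul_ne_zero hvm hvp)]
  ring

lemma diag_core (a x y v W : ℂ) (ha : a ≠ 0) (hx : x ≠ 0) (hy : y ≠ 0) (hv : v ≠ 0)
    (hW : W ≠ 0) (hvm : v - v⁻¹ ≠ 0) (hvp : v + v⁻¹ ≠ 0) (hrel : v * v = x * y⁻¹) :
    ((a^2 * (x*y) - (a^2)⁻¹ * (x⁻¹*y⁻¹)) / W + (x*y⁻¹ - x⁻¹*y) / W) / ((x*y⁻¹ - x⁻¹*y) / W) =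
      ((a*x - a⁻¹*x⁻¹)/(v - v⁻¹)) * ((a*y + a⁻¹*y⁻¹)/(v + v⁻¹)) := by
  have hxe : x = v*v*y := by rw [hrel, mul_assoc, inv_mul_cancel₀ hy, mul_one]
  subst hxe
  simp only [mul_inv]
  have hfac : (v*v*y)*y⁻¹ - v⁻¹*v⁻¹*y⁻¹*y = (v - v⁻¹)*(v + v⁻¹) := by
    field_simp
    ring
  rw [← add_div, div_div_div_cancel_right₀ hW]
  rw [show v*v*y*y⁻¹ - v⁻¹*v⁻¹*y⁻¹*y = (v - v⁻¹)*(v + v⁻¹) from hfac]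
  rw [div_mul_div_comm]
  have ea : a * a⁻¹ = 1 := mul_inv_cancel₀ ha
  have ey : y * y⁻¹ = 1 := mul_inv_cancel₀ hy
  congr 1
  linear_combination (v⁻¹*v⁻¹*y*y⁻¹ - v*v*y*y⁻¹) * ea + (v⁻¹*v⁻¹ - v*v) * ey

lemma sW_ne (s : ℂ) (hs : s ≠ 0) (hroot : ∀ m : ℕ, 0 < m → s ^ m ≠ 1) :
    (s^2 : ℂ) - (s^2)⁻¹ ≠ 0 := by
  have h := ssub_ne s hs hroot 2 (by norm_num)
  rw [zpow_neg] at h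
  norm_num at h ⊢
  convert h using 2

lemma offdiag_cell (α s : ℂ) (hα : α ≠ 0) (hs : s ≠ 0)
    (hroot : ∀ m : ℕ, 0 < m → s ^ m ≠ 1) (m h : ℤ) (hh : 1 ≤ h) :
    qintA (α^2) (s^2) m / qint (s^2) h =
      ((α * s ^ m - α⁻¹ * s ^ (-m)) / (s ^ h - s ^ (-h))) *
      ((α * s ^ m + α⁻¹ * s ^ (-m)) / (s ^ h + s ^ (-h))) := by
  have hW := sW_ne s hs hroot
  have hvm : s ^ h - (s ^ h)⁻¹ ≠ 0 := by
    have := ssub_ne s hs hroot h (by omega); rwa [zpow_neg] at this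
  have hvp : s ^ h + (s ^ h)⁻¹ ≠ 0 := by
    have := sadd_ne s hs hroot h (by omega); rwa [zpow_neg] at this
  have em : (s^2 : ℂ) ^ m = s ^ m * s ^ m := by
    rw [sq_zpow, show 2*m = m + m by ring, zpow_add₀ hs]
  have emn : (s^2 : ℂ) ^ (-m) = (s ^ m)⁻¹ * (s ^ m)⁻¹ := by
    rw [sq_zpow, show 2*(-m) = (-m) + (-m) by ring, zpow_add₀ hs, zpow_neg]
  have eh : (s^2 : ℂ) ^ h = s ^ h * s ^ h := by
    rw [sq_zpow, show 2*h = h + h by ring, zpow_add₀ hs]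
  have ehn : (s^2 : ℂ) ^ (-h) = (s ^ h)⁻¹ * (s ^ h)⁻¹ := by
    rw [sq_zpow, show 2*(-h) = (-h) + (-h) by ring, zpow_add₀ hs, zpow_neg]
  rw [qintA, qint, em, emn, eh, ehn, zpow_neg s m, zpow_neg s h]
  exact cell_core α (s ^ m) (s ^ h) _ hα (zpow_ne_zero _ hs) (zpow_ne_zero _ hs) hW hvm hvp

lemma diag_cell (α s : ℂ) (hα : α ≠ 0) (hs : s ≠ 0)
    (hroot : ∀ m : ℕ, 0 < m → s ^ m ≠ 1) (c m1 m2 h : ℤ) (hh : 1 ≤ h)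
    (e1 : m1 + m2 = 2*c) (e2 : m1 - m2 = 2*h) :
    (qintA (α^2) (s^2) c + qint (s^2) h) / qint (s^2) h =
      ((α * s ^ m1 - α⁻¹ * s ^ (-m1)) / (s ^ h - s ^ (-h))) *
      ((α * s ^ m2 + α⁻¹ * s ^ (-m2)) / (s ^ h + s ^ (-h))) := by
  have hW := sW_ne s hs hroot
  have hvm : s ^ h - (s ^ h)⁻¹ ≠ 0 := by
    have := ssub_ne s hs hroot h (by omega); rwa [zpow_neg] at this
  have hvp : s ^ h + (s ^ h)⁻¹ ≠ 0 := by
    have := sadd_ne s hs hroot h (by omega); rwa [zpow_neg] at this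
  have ec : (s^2 : ℂ) ^ c = s ^ m1 * s ^ m2 := by
    rw [sq_zpow, show 2*c = m1 + m2 by omega, zpow_add₀ hs]
  have ecn : (s^2 : ℂ) ^ (-c) = (s ^ m1)⁻¹ * (s ^ m2)⁻¹ := by
    rw [sq_zpow, show 2*(-c) = (-m1) + (-m2) by omega, zpow_add₀ hs, zpow_neg, zpow_neg]
  have eh : (s^2 : ℂ) ^ h = s ^ m1 * (s ^ m2)⁻¹ := by
    rw [sq_zpow, show 2*h = m1 + (-m2) by omega, zpow_add₀ hs, zpow_neg]
  have ehn : (s^2 : ℂ) ^ (-h) = (s ^ m1)⁻¹ * s ^ m2 := by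
    rw [sq_zpow, show 2*(-h) = (-m1) + m2 by omega, zpow_add₀ hs, zpow_neg]
  have hrel : s ^ h * s ^ h = s ^ m1 * (s ^ m2)⁻¹ := by
    rw [← zpow_add₀ hs, show h + h = m1 + (-m2) by omega, zpow_add₀ hs, zpow_neg]
  rw [qintA, qint, ec, ecn, eh, ehn, zpow_neg s m1, zpow_neg s m2, zpow_neg s h]
  exact diag_core α (s ^ m1) (s ^ m2) (s ^ h) _ hα (zpow_ne_zero _ hs)
    (zpow_ne_zero _ hs) (zpow_ne_zero _ hs) hW hvm hvp hrel

end WenzlAux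

/-- Wenzl's quantum dimension evaluated at `(α², s²)` equals
`∏_{(i,j)∈λ} (α s^{d_λ(i,j)} - α⁻¹ s^{-d_λ(i,j)})/(s^{hl(i,j)} - s^{-hl(i,j)}) ·
 ∏_{(i,j)∈λ} (α s^{d'_λ(i,j)} + α⁻¹ s^{-d'_λ(i,j)})/(s^{hl(i,j)} + s^{-hl(i,j)})`. -/
theorem wenzl_formula_two (α s : ℂ) (hα : α ≠ 0) (hs : s ≠ 0)
    (hroot : ∀ m : ℕ, 0 < m → s ^ m ≠ 1)
    (lam lamV : ℕ → ℕ) (N : ℕ) (hN : ∀ i, N < i → lam i = 0)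
    (hconj : ∀ i j : ℕ, 1 ≤ i → 1 ≤ j → (j ≤ lam i ↔ i ≤ lamV j)) :
    wenzl (α ^ 2) (s ^ 2) lam lamV N =
      (∏ p ∈ cells lam N,
        (α * s ^ dcell lam lamV p - α⁻¹ * s ^ (-dcell lam lamV p)) /
          (s ^ hookl lam lamV p - s ^ (-hookl lam lamV p))) *
      ∏ p ∈ cells lam N,
        (α * s ^ dcell' lam lamV p + α⁻¹ * s ^ (-dcell' lam lamV p)) /
          (s ^ hookl lam lamV p + s ^ (-hookl lam lamV p)) := by
  rw [wenzl, ← Finset.prod_mul_distrib,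
    ← Finset.prod_filter_mul_prod_filter_not (cells lam N) (fun p => p.1 = p.2)]
  congr 1
  · refine Finset.prod_congr rfl ?_
    intro p hp
    rw [Finset.mem_filter] at hp
    obtain ⟨hpc, hdiag⟩ := hp
    simp only [cells, Finset.mem_filter, Finset.mem_product, Finset.mem_Icc] at hpc
    obtain ⟨⟨⟨hi1, hiN⟩, hj1, hjl⟩, hple⟩ := hpc
    have hlV : p.1 ≤ lamV p.2 := (hconj p.1 p.2 hi1 hj1).mp hple
    have hh : 1 ≤ hookl lam lamV p := by
      unfold hookl; omega
    refine diag_cell α s hα hs hroot _ _ _ _ hh ?_ ?_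
    · simp only [dcell, dcell', hookl, hdiag, le_refl, lt_irrefl, if_true, if_false]
      omega
    · simp only [dcell, dcell', hookl, hdiag, le_refl, lt_irrefl, if_true, if_false]
      omega
  · refine Finset.prod_congr rfl ?_
    intro p hp
    rw [Finset.mem_filter] at hp
    obtain ⟨hpc, hne⟩ := hp
    simp only [cells, Finset.mem_filter, Finset.mem_product, Finset.mem_Icc] at hpc
    obtain ⟨⟨⟨hi1, hiN⟩, hj1, hjl⟩, hple⟩ := hpc
    have hlV : p.1 ≤ lamV p.2 := (hconj p.1 p.2 hi1 hj1).mp hple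
    have hh : 1 ≤ hookl lam lamV p := by
      unfold hookl; omega
    have hdd : dcell' lam lamV p = dcell lam lamV p := by
      unfold dcell dcell'
      rcases lt_or_gt_of_ne hne with hlt | hgt
      · rw [if_pos hlt, if_pos (le_of_lt hlt)]
      · rw [if_neg (by omega), if_neg (by omega)]
    rw [hdd]
    exact offdiag_cell α s hα hs hroot _ _ hh
end

section
/- Let α and s be nonzero complex numbers with s not a root of unity, and let λ be a partition with conjugate partition λ^∨. Then Wenzl's quantum dimension satisfies the symmetries ⟨λ⟩_{α,s} = ⟨λ⟩_{−α,−s} = ⟨λ⟩_{α^{−1},s^{−1}} = ⟨λ^∨⟩_{α,−s^{−1}}. -/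
open Finset

lemma sg_ne (m : ℤ) : ((-1:ℂ))^m ≠ 0 := zpow_ne_zero m (by norm_num)

lemma sg_neg (m : ℤ) : (-1:ℂ)^(-m) = (-1:ℂ)^m := by
  rcases Int.even_or_odd m with h | h
  · rw [h.neg.neg_one_zpow, h.neg_one_zpow]
  · rw [h.neg.neg_one_zpow, h.neg_one_zpow]

lemma sg_even_diff {m n : ℤ} (h : Even (m - n)) : (-1:ℂ)^m = (-1:ℂ)^n := by
  have : m = (m - n) + n := by ring
  rw [this, zpow_add₀ (by norm_num : (-1:ℂ) ≠ 0), h.neg_one_zpow, one_mul]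

lemma neg_zpow' (s : ℂ) (m : ℤ) : (-s)^m = (-1:ℂ)^m * s^m := by
  rw [neg_eq_neg_one_mul, mul_zpow]

lemma qint_neg (s : ℂ) (m : ℤ) : qint (-s) m = -((-1:ℂ)^m * qint s m) := by
  unfold qint
  rw [show (-s) - (-s)⁻¹ = -(s - s⁻¹) by rw [inv_neg]; ring,
    neg_zpow' s m, neg_zpow' s (-m), sg_neg, div_neg, ← mul_sub, mul_div_assoc]

lemma qintA_neg (α s : ℂ) (m : ℤ) : qintA (-α) (-s) m = (-1:ℂ)^m * qintA α s m := by
  unfold qintA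
  rw [show (-s) - (-s)⁻¹ = -(s - s⁻¹) by rw [inv_neg]; ring,
    neg_zpow' s m, neg_zpow' s (-m), sg_neg, inv_neg]
  rw [show -α * ((-1:ℂ)^m * s^m) - -α⁻¹ * ((-1:ℂ)^m * s^(-m))
      = (-1:ℂ)^m * (-(α * s^m - α⁻¹ * s^(-m))) by ring, mul_div_assoc, neg_div, div_neg, neg_neg]

lemma qint_inv (s : ℂ) (m : ℤ) : qint s⁻¹ m = qint s m := by
  unfold qint
  rw [inv_inv, inv_zpow, ← zpow_neg, inv_zpow, ← zpow_neg, neg_neg,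
    show s^(-m) - s^m = -(s^m - s^(-m)) by ring,
    show s⁻¹ - s = -(s - s⁻¹) by ring, neg_div_neg_eq]

lemma qintA_inv (α s : ℂ) (m : ℤ) : qintA α⁻¹ s⁻¹ m = qintA α s m := by
  unfold qintA
  rw [inv_inv, inv_inv, inv_zpow, ← zpow_neg, inv_zpow, ← zpow_neg, neg_neg,
    show α⁻¹ * s^(-m) - α * s^m = -(α * s^m - α⁻¹ * s^(-m)) by ring,
    show s⁻¹ - s = -(s - s⁻¹) by ring, neg_div_neg_eq]

lemma qint_neg_inv (s : ℂ) (m : ℤ) : qint (-s⁻¹) m = -((-1:ℂ)^m * qint s m) := by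
  rw [qint_neg, qint_inv]

lemma qintA_neg_inv (α s : ℂ) (m : ℤ) : qintA α (-s⁻¹) m = (-1:ℂ)^m * qintA α s (-m) := by
  unfold qintA
  rw [show (-s⁻¹) - (-s⁻¹)⁻¹ = s - s⁻¹ by rw [inv_neg, inv_inv]; ring,
    neg_zpow' s⁻¹ m, neg_zpow' s⁻¹ (-m), sg_neg, inv_zpow, ← zpow_neg, inv_zpow, ← zpow_neg, neg_neg]
  rw [show α * ((-1:ℂ)^m * s^(-m)) - α⁻¹ * ((-1:ℂ)^m * s^m)
      = (-1:ℂ)^m * (α * s^(-m) - α⁻¹ * s^(- -m)) by rw [neg_neg]; ring, mul_div_assoc, neg_neg]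

lemma sg_sq (e : ℤ) : ((-1:ℂ)^e) * ((-1:ℂ)^e) = 1 := by
  rw [← zpow_add₀ (by norm_num : (-1:ℂ) ≠ 0)]
  exact Even.neg_one_zpow ⟨e, rfl⟩

lemma sg_pow_even (e : ℤ) {n : ℕ} (hn : Even n) : ((-1:ℂ)^e)^n = 1 := by
  obtain ⟨t, rfl⟩ := hn
  rw [pow_add, ← mul_pow, sg_sq, one_pow]

lemma off_neg (α s : ℂ) (d h : ℤ) :
    qintA (-α) (-s) d / qint (-s) h
      = (-1:ℂ)^(d + h + 1) * (qintA α s d / qint s h) := by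
  rw [qintA_neg, qint_neg, div_neg, mul_div_mul_comm,
    ← zpow_sub₀ (by norm_num : (-1:ℂ) ≠ 0), ← neg_mul,
    show -(-1:ℂ)^(d-h) = (-1:ℂ)^(d-h) * ((-1:ℂ)^(1:ℤ)) by rw [zpow_one]; ring,
    ← zpow_add₀ (by norm_num : (-1:ℂ) ≠ 0)]
  congr 1
  exact sg_even_diff ⟨-h, by ring⟩

lemma off_swap (α s : ℂ) (d h : ℤ) :
    qintA α (-s⁻¹) (-d) / qint (-s⁻¹) h
      = (-1:ℂ)^(d + h + 1) * (qintA α s d / qint s h) := by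
  rw [qintA_neg_inv, sg_neg, neg_neg, qint_neg_inv, div_neg, mul_div_mul_comm,
    ← zpow_sub₀ (by norm_num : (-1:ℂ) ≠ 0), ← neg_mul,
    show -(-1:ℂ)^(d-h) = (-1:ℂ)^(d-h) * ((-1:ℂ)^(1:ℤ)) by rw [zpow_one]; ring,
    ← zpow_add₀ (by norm_num : (-1:ℂ) ≠ 0)]
  congr 1
  exact sg_even_diff ⟨-h, by ring⟩

lemma diag_neg (α s : ℂ) (a h : ℤ) (hpar : Even (a - (h + 1))) :
    (qintA (-α) (-s) a + qint (-s) h) / qint (-s) h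
      = (qintA α s a + qint s h) / qint s h := by
  rw [qintA_neg, qint_neg,
    show -((-1:ℂ)^h * qint s h) = (-1:ℂ)^(h+1) * qint s h by
      rw [zpow_add₀ (by norm_num : (-1:ℂ) ≠ 0), zpow_one]; ring,
    sg_even_diff hpar, ← mul_add,
    mul_div_mul_left _ _ (sg_ne (h+1))]

lemma diag_swap (α s : ℂ) (a h : ℤ) (hpar : Even (a - (h + 1))) :
    (qintA α (-s⁻¹) (-a) + qint (-s⁻¹) h) / qint (-s⁻¹) h
      = (qintA α s a + qint s h) / qint s h := by
  rw [qintA_neg_inv, sg_neg, neg_neg, qint_neg_inv,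
    show -((-1:ℂ)^h * qint s h) = (-1:ℂ)^(h+1) * qint s h by
      rw [zpow_add₀ (by norm_num : (-1:ℂ) ≠ 0), zpow_one]; ring,
    sg_even_diff hpar, ← mul_add,
    mul_div_mul_left _ _ (sg_ne (h+1))]

section
variable {lam lamV : ℕ → ℕ} {N : ℕ}

lemma lam_anti (hconj : ∀ i j : ℕ, 1 ≤ i → 1 ≤ j → (j ≤ lam i ↔ i ≤ lamV j))
    {i i' : ℕ} (h1 : 1 ≤ i) (h2 : i ≤ i') : lam i' ≤ lam i := by
  rcases Nat.eq_zero_or_pos (lam i') with h | h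
  · omega
  · have h1' : 1 ≤ i' := le_trans h1 h2
    have hv := (hconj i' (lam i') h1' h).mp le_rfl
    exact (hconj i (lam i') h1 h).mpr (le_trans h2 hv)

lemma mem_cells (hN : ∀ i, N < i → lam i = 0)
    (hconj : ∀ i j : ℕ, 1 ≤ i → 1 ≤ j → (j ≤ lam i ↔ i ≤ lamV j)) (p : ℕ × ℕ) :
    p ∈ cells lam N ↔ 1 ≤ p.1 ∧ 1 ≤ p.2 ∧ p.2 ≤ lam p.1 := by
  simp only [cells, mem_filter, mem_product, mem_Icc]
  constructor
  · rintro ⟨⟨⟨h1, _⟩, ⟨h2, _⟩⟩, h3⟩; exact ⟨h1, h2, h3⟩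
  · rintro ⟨h1, h2, h3⟩
    have hlt : lam p.1 ≠ 0 := by omega
    have hpN : p.1 ≤ N := by by_contra h; exact hlt (hN _ (by omega))
    exact ⟨⟨⟨h1, hpN⟩, ⟨h2, le_trans h3 (lam_anti hconj le_rfl h1)⟩⟩, h3⟩

end

lemma sign_prod (lam lamV : ℕ → ℕ) (N : ℕ)
    (hN : ∀ i, N < i → lam i = 0)
    (hconj : ∀ i j : ℕ, 1 ≤ i → 1 ≤ j → (j ≤ lam i ↔ i ≤ lamV j)) :
    ∏ p ∈ (cells lam N).filter (fun p => p.1 ≠ p.2),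
      (-1:ℂ)^(dcell lam lamV p + hookl lam lamV p + 1) = 1 := by
  classical
  set T := (cells lam N).filter (fun p => p.1 ≠ p.2) with hT
  have hstep1 : ∀ p ∈ T, (-1:ℂ)^(dcell lam lamV p + hookl lam lamV p + 1)
      = (-1:ℂ)^((lam (max p.1 p.2) : ℤ) + (lamV (max p.1 p.2) : ℤ) + 1) := by
    intro p hp
    have hne : p.1 ≠ p.2 := (mem_filter.mp hp).2
    rcases lt_or_gt_of_ne hne with hlt | hgt
    · rw [max_eq_right hlt.le]
      apply sg_even_diff
      simp only [dcell, hookl, if_pos hlt.le]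
      exact ⟨(lam p.1 : ℤ) - p.1 - p.2 + 1, by ring⟩
    · rw [max_eq_left hgt.le]
      apply sg_even_diff
      simp only [dcell, hookl, if_neg (not_le.mpr hgt)]
      exact ⟨-(lamV p.1 : ℤ), by ring⟩
  rw [Finset.prod_congr rfl hstep1]
  have hmaps : ∀ p ∈ T, max p.1 p.2 ∈ Finset.Icc 1 (max N (lam 1)) := by
    intro p hp
    have h := (mem_filter.mp hp).1
    simp only [cells, mem_filter, mem_product, mem_Icc] at h
    simp only [mem_Icc]
    omega
  rw [← Finset.prod_fiberwise_of_maps_to hmaps]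
  apply Finset.prod_eq_one
  intro k hk
  obtain ⟨hk1, _⟩ := mem_Icc.mp hk
  have hconst : ∀ p ∈ T.filter (fun p => max p.1 p.2 = k),
      ((-1:ℂ)^((lam (max p.1 p.2) : ℤ) + (lamV (max p.1 p.2) : ℤ) + 1))
        = (-1:ℂ)^((lam k : ℤ) + (lamV k : ℤ) + 1) := by
    intro p hp
    rw [(mem_filter.mp hp).2]
  rw [Finset.prod_congr rfl hconst, Finset.prod_const]
  have hinj1 : Function.Injective (fun i : ℕ => (i, k)) := by
    intro a b h; simpa using h
  have hinj2 : Function.Injective (fun j : ℕ => (k, j)) := by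
    intro a b h; simpa using h
  have hset : T.filter (fun p => max p.1 p.2 = k)
      = ((Finset.Icc 1 (min (lamV k) (k-1))).image (fun i => (i, k))) ∪
        ((Finset.Icc 1 (min (lam k) (k-1))).image (fun j => (k, j))) := by
    ext ⟨i, j⟩
    simp only [hT, mem_filter, mem_cells hN hconj, mem_union, mem_image, mem_Icc,
      Prod.mk.injEq]
    constructor
    · rintro ⟨⟨⟨h1, h2, h3⟩, hne⟩, hmax⟩
      rcases lt_or_gt_of_ne hne with hlt | hgt
      · have hj : j = k := by omega
        have h4 : i ≤ lamV k := (hconj i k h1 hk1).mp (hj ▸ h3)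
        exact Or.inl ⟨i, ⟨h1, by omega⟩, rfl, hj.symm⟩
      · have hi : i = k := by omega
        have h3' : j ≤ lam k := hi ▸ h3
        exact Or.inr ⟨j, ⟨h2, by omega⟩, hi.symm, rfl⟩
    · rintro (⟨a, ⟨ha1, ha2⟩, rfl, rfl⟩ | ⟨b, ⟨hb1, hb2⟩, rfl, rfl⟩)
      · have h3 : k ≤ lam a := (hconj a k ha1 hk1).mpr (by omega)
        refine ⟨⟨⟨ha1, hk1, h3⟩, ?_⟩, ?_⟩ <;> simp <;> omega
      · have h3 : b ≤ lam k := by omega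
        refine ⟨⟨⟨hk1, hb1, h3⟩, ?_⟩, ?_⟩ <;> simp <;> omega
  have hdis : Disjoint ((Finset.Icc 1 (min (lamV k) (k-1))).image (fun i => (i, k)))
      ((Finset.Icc 1 (min (lam k) (k-1))).image (fun j => (k, j))) := by
    rw [Finset.disjoint_left]
    rintro p hp hq
    simp only [mem_image, mem_Icc] at hp hq
    obtain ⟨a, ⟨ha1, ha2⟩, rfl⟩ := hp
    obtain ⟨b, ⟨hb1, hb2⟩, hbe⟩ := hq
    have : k = a := (Prod.mk.injEq _ _ _ _).mp hbe |>.1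
    omega
  have hcard : (T.filter (fun p => max p.1 p.2 = k)).card
      = min (lamV k) (k-1) + min (lam k) (k-1) := by
    rw [hset, Finset.card_union_of_disjoint hdis,
      Finset.card_image_of_injective _ hinj1, Finset.card_image_of_injective _ hinj2,
      Nat.card_Icc, Nat.card_Icc]
    omega
  rw [hcard]
  by_cases hkk : k ≤ lam k
  · have hkk' : k ≤ lamV k := (hconj k k hk1 hk1).mp hkk
    apply sg_pow_even
    have e1 : min (lamV k) (k-1) = k-1 := by omega
    have e2 : min (lam k) (k-1) = k-1 := by omega
    rw [e1, e2]
    exact ⟨k-1, rfl⟩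
  · have hkk' : ¬ k ≤ lamV k := fun h => hkk ((hconj k k hk1 hk1).mpr h)
    have e1 : min (lamV k) (k-1) = lamV k := by omega
    have e2 : min (lam k) (k-1) = lam k := by omega
    rw [e1, e2]
    rcases Nat.even_or_odd (lamV k + lam k) with he | ho
    · exact sg_pow_even _ he
    · have hev : Even ((lam k : ℤ) + (lamV k : ℤ) + 1) := by
        obtain ⟨t, ht⟩ := ho
        exact ⟨(t:ℤ)+1, by omega⟩
      rw [hev.neg_one_zpow, one_pow]

lemma hookl_swap (lam lamV : ℕ → ℕ) (p : ℕ × ℕ) :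
    hookl lamV lam p = hookl lam lamV (Prod.swap p) := by
  simp only [hookl, Prod.fst_swap, Prod.snd_swap]; ring

lemma dcell_swap (lam lamV : ℕ → ℕ) (p : ℕ × ℕ) (hne : p.1 ≠ p.2) :
    dcell lamV lam p = -dcell lam lamV (Prod.swap p) := by
  rcases lt_or_gt_of_ne hne with hlt | hgt
  · simp only [dcell, Prod.fst_swap, Prod.snd_swap, if_pos hlt.le, if_neg (not_le.mpr hlt)]
    ring
  · simp only [dcell, Prod.fst_swap, Prod.snd_swap, if_neg (not_le.mpr hgt), if_pos hgt.le]
    ring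


/-- Symmetries of Wenzl's quantum dimension:
`⟨λ⟩_{α,s} = ⟨λ⟩_{-α,-s} = ⟨λ⟩_{α⁻¹,s⁻¹} = ⟨λ^∨⟩_{α,-s⁻¹}`. -/
theorem wenzl_symmetries (α s : ℂ) (hα : α ≠ 0) (hs : s ≠ 0)
    (hroot : ∀ m : ℕ, 0 < m → s ^ m ≠ 1)
    (lam lamV : ℕ → ℕ) (N : ℕ) (hN : ∀ i, N < i → lam i = 0)
    (hconj : ∀ i j : ℕ, 1 ≤ i → 1 ≤ j → (j ≤ lam i ↔ i ≤ lamV j)) :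
    wenzl α s lam lamV N = wenzl (-α) (-s) lam lamV N ∧
    wenzl α s lam lamV N = wenzl α⁻¹ s⁻¹ lam lamV N ∧
    wenzl α s lam lamV N = wenzl α (-s⁻¹) lamV lam (lam 1) := by
  refine ⟨?_, ?_, ?_⟩
  · unfold wenzl
    congr 1
    · apply Finset.prod_congr rfl
      intro p hp
      have hpp : p.1 = p.2 := (mem_filter.mp hp).2
      refine (diag_neg α s _ _ ⟨-(lamV p.1 : ℤ) + p.1 - 1, ?_⟩).symm
      simp only [hookl, ← hpp]
      ring
    · rw [Finset.prod_congr rfl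
          (fun p _ => off_neg α s (dcell lam lamV p) (hookl lam lamV p)),
        Finset.prod_mul_distrib, sign_prod lam lamV N hN hconj, one_mul]
  · unfold wenzl
    simp only [qintA_inv, qint_inv]
  · have hconj' : ∀ i j : ℕ, 1 ≤ i → 1 ≤ j → (j ≤ lamV i ↔ i ≤ lam j) :=
      fun i j hi hj => (hconj j i hj hi).symm
    have hN' : ∀ i, lam 1 < i → lamV i = 0 := by
      intro i hi
      by_contra h
      have h1 : 1 ≤ lamV i := Nat.one_le_iff_ne_zero.mpr h
      have hi1 : 1 ≤ i := by omega
      exact absurd ((hconj 1 i le_rfl hi1).mpr h1) (by omega)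
    have hmemV : ∀ p : ℕ × ℕ, p ∈ cells lamV (lam 1) ↔ Prod.swap p ∈ cells lam N := by
      intro p
      rw [mem_cells hN' hconj', mem_cells hN hconj]
      simp only [Prod.fst_swap, Prod.snd_swap]
      constructor
      · rintro ⟨h1, h2, h3⟩; exact ⟨h2, h1, (hconj' p.1 p.2 h1 h2).mp h3⟩
      · rintro ⟨h1, h2, h3⟩; exact ⟨h2, h1, (hconj p.2 p.1 h1 h2).mp h3⟩
    have hdiagset : (cells lamV (lam 1)).filter (fun p => p.1 = p.2)
        = (cells lam N).filter (fun p => p.1 = p.2) := by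
      ext ⟨i, j⟩
      simp only [mem_filter, mem_cells hN' hconj', mem_cells hN hconj]
      constructor
      · rintro ⟨⟨h1, h2, h3⟩, he⟩
        refine ⟨⟨h1, h2, ?_⟩, he⟩
        have := (hconj i i h1 h1).mpr (by omega)
        omega
      · rintro ⟨⟨h1, h2, h3⟩, he⟩
        refine ⟨⟨h1, h2, ?_⟩, he⟩
        have := (hconj i i h1 h1).mp (by omega)
        omega
    unfold wenzl
    congr 1
    · rw [hdiagset]
      apply Finset.prod_congr rfl
      intro p hp
      have hpp : p.1 = p.2 := (mem_filter.mp hp).2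
      have hh : hookl lamV lam p = hookl lam lamV p := by
        simp only [hookl, ← hpp]; ring
      rw [hh, show (lamV p.1 : ℤ) - (lam p.1 : ℤ) = -((lam p.1 : ℤ) - (lamV p.1 : ℤ)) by ring]
      refine (diag_swap α s _ _ ⟨-(lamV p.1 : ℤ) + p.1 - 1, ?_⟩).symm
      simp only [hookl, ← hpp]
      ring
    · refine Eq.symm ?_
      rw [Finset.prod_nbij' Prod.swap Prod.swap
          (t := (cells lam N).filter (fun p => p.1 ≠ p.2))
          (g := fun q => (-1:ℂ)^(dcell lam lamV q + hookl lam lamV q + 1) *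
            (qintA α s (dcell lam lamV q) / qint s (hookl lam lamV q)))
          ?_ ?_ (fun a _ => Prod.swap_swap a) (fun a _ => Prod.swap_swap a) ?_]
      · rw [Finset.prod_mul_distrib, sign_prod lam lamV N hN hconj, one_mul]
      · intro p hp
        rw [mem_filter] at hp ⊢
        exact ⟨(hmemV p).mp hp.1, by simpa [ne_comm] using hp.2⟩
      · intro p hp
        rw [mem_filter] at hp ⊢
        refine ⟨(hmemV (Prod.swap p)).mpr (by simpa using hp.1), by simpa [ne_comm] using hp.2⟩
      · intro p hp
        have hne : p.1 ≠ p.2 := (mem_filter.mp hp).2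
        rw [dcell_swap lam lamV p hne, hookl_swap lam lamV p]
        exact off_swap α s _ _
end

section
/- Let α and s be nonzero complex numbers with s not a root of unity, and let j ≥ 1. Then Wenzl's quantum dimension of the single-column partition 1^j = (1,1,…,1) (j parts equal to 1) satisfies ⟨1^j⟩_{α,s} = [0]_α·[−1]_α·…·[2−j]_α·([1−j]_α + [j]) / [j]!, where [j]! = [1][2]⋯[j]. -/
open Finset

/-- The single-column partition `1^j` (j parts equal to 1), as a 1-based part function. -/
def colPart (j : ℕ) : ℕ → ℕ := fun i => if 1 ≤ i ∧ i ≤ j then 1 else 0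

/-- The single-row partition `(j)`, as a 1-based part function. -/
def rowPart (j : ℕ) : ℕ → ℕ := fun i => if i = 1 then j else 0

lemma cells_col (j : ℕ) (hj : 1 ≤ j) :
    cells (colPart j) j = (Finset.Icc 1 j).image (fun i => (i, 1)) := by
  have hcp : ∀ i, 1 ≤ i → i ≤ j → colPart j i = 1 := fun i h1 h2 => if_pos ⟨h1, h2⟩
  ext p
  obtain ⟨x, y⟩ := p
  simp only [cells, hcp 1 le_rfl hj, Finset.mem_filter, Finset.mem_product, Finset.mem_Icc,
    Finset.mem_image]
  constructor
  · rintro ⟨⟨⟨h1a, h1b⟩, h2a, h2b⟩, h3⟩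
    refine ⟨x, ⟨h1a, h1b⟩, ?_⟩
    have : y = 1 := le_antisymm h2b h2a
    rw [this]
  · rintro ⟨i, hi, h⟩
    obtain ⟨rfl, rfl⟩ : i = x ∧ 1 = y := by rw [Prod.mk.injEq] at h; exact h
    exact ⟨⟨hi, le_refl 1, le_refl 1⟩, (hcp i hi.1 hi.2).ge⟩

/-- Wenzl's quantum dimension of a single column:
`⟨1^j⟩_{α,s} = [0]_α [-1]_α ⋯ [2-j]_α ([1-j]_α + [j]) / [j]!`. -/
theorem wenzl_column (α s : ℂ) (hα : α ≠ 0) (hs : s ≠ 0)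
    (hroot : ∀ m : ℕ, 0 < m → s ^ m ≠ 1) (j : ℕ) (hj : 1 ≤ j) :
    wenzl α s (colPart j) (rowPart j) j =
      (∏ t ∈ Finset.range (j - 1), qintA α s (-(t : ℤ))) *
        (qintA α s (1 - (j : ℤ)) + qint s j) /
      ∏ m ∈ Finset.Icc 1 j, qint s m := by
  have hinj : Set.InjOn (fun i : ℕ => (i, 1)) (Finset.Icc 1 j) := by
    intro a _ b _ h; simpa using h
  have hc := cells_col j hj
  -- diagonal filter
  have hdiag : (cells (colPart j) j).filter (fun p => p.1 = p.2) = {(1, 1)} := by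
    rw [hc]; ext p
    simp only [Finset.mem_filter, Finset.mem_image, Finset.mem_Icc, Finset.mem_singleton]
    constructor
    · rintro ⟨⟨i, hi, rfl⟩, h⟩
      obtain rfl : i = 1 := h
      rfl
    · rintro rfl; exact ⟨⟨1, ⟨le_refl 1, hj⟩, rfl⟩, rfl⟩
  have hoff : (cells (colPart j) j).filter (fun p => p.1 ≠ p.2) =
      (Finset.Icc 2 j).image (fun i => (i, 1)) := by
    rw [hc]; ext p
    simp only [Finset.mem_filter, Finset.mem_image, Finset.mem_Icc]
    constructor
    · rintro ⟨⟨i, hi, rfl⟩, h⟩; exact ⟨i, ⟨by simp only at h; omega, hi.2⟩, rfl⟩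
    · rintro ⟨i, hi, rfl⟩; exact ⟨⟨i, ⟨by omega, hi.2⟩, rfl⟩, by simp; omega⟩
  rw [wenzl, hdiag, hoff]
  rw [Finset.prod_singleton]
  rw [Finset.prod_image (fun a ha b hb h => by simpa using h)]
  -- evaluate diagonal term
  have hd1 : (colPart j 1 : ℤ) - (rowPart j 1 : ℤ) = 1 - j := by
    simp [colPart, rowPart, hj]
  have hh1 : hookl (colPart j) (rowPart j) (1, 1) = j := by
    simp [hookl, colPart, rowPart, hj]
  rw [hd1, hh1]
  -- evaluate off-diagonal terms
  have hoffval : ∀ i ∈ Finset.Icc 2 j,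
      qintA α s (dcell (colPart j) (rowPart j) (i, 1)) /
        qint s (hookl (colPart j) (rowPart j) (i, 1)) =
      qintA α s ((i : ℤ) - j) / qint s ((j : ℤ) + 1 - i) := by
    intro i hi
    simp only [Finset.mem_Icc] at hi
    have h2 : ¬ (i ≤ 1) := by omega
    have hne : i ≠ 1 := by omega
    have : dcell (colPart j) (rowPart j) (i, 1) = (i : ℤ) - j := by
      simp only [dcell, h2, if_neg, rowPart, hne, if_neg, if_pos]
      push_cast; ring
    rw [this]
    have : hookl (colPart j) (rowPart j) (i, 1) = (j : ℤ) + 1 - i := by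
      unfold hookl colPart rowPart
      rw [if_pos ⟨(by omega : 1 ≤ i), hi.2⟩, if_pos rfl]
      push_cast; ring
    rw [this]
  rw [Finset.prod_congr rfl hoffval]
  rw [Finset.prod_div_distrib, div_mul_div_comm]
  -- reindex numerator
  have hnum : ∏ i ∈ Finset.Icc 2 j, qintA α s ((i : ℤ) - j) =
      ∏ t ∈ Finset.range (j - 1), qintA α s (-(t : ℤ)) := by
    refine Finset.prod_nbij' (fun i => j - i) (fun t => j - t) ?_ ?_ ?_ ?_ ?_
    · intro i hi; simp only [Finset.mem_Icc] at hi; simp only [Finset.mem_range]; omega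
    · intro t ht; simp only [Finset.mem_range] at ht; simp only [Finset.mem_Icc]; omega
    · intro i hi; simp only [Finset.mem_Icc] at hi; omega
    · intro t ht; simp only [Finset.mem_range] at ht; omega
    · intro i hi; simp only [Finset.mem_Icc] at hi
      congr 1; push_cast [Nat.cast_sub (by omega : i ≤ j)]; ring
  -- reindex denominator
  have hden : qint s (j : ℤ) * ∏ i ∈ Finset.Icc 2 j, qint s ((j : ℤ) + 1 - i) =
      ∏ m ∈ Finset.Icc 1 j, qint s (m : ℤ) := by
    have h1 : ∏ i ∈ Finset.Icc 2 j, qint s ((j : ℤ) + 1 - i) =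
        ∏ m ∈ Finset.Icc 1 (j - 1), qint s (m : ℤ) := by
      refine Finset.prod_nbij' (fun i => j + 1 - i) (fun m => j + 1 - m) ?_ ?_ ?_ ?_ ?_
      · intro i hi; simp only [Finset.mem_Icc] at hi ⊢; omega
      · intro m hm; simp only [Finset.mem_Icc] at hm ⊢; omega
      · intro i hi; simp only [Finset.mem_Icc] at hi; omega
      · intro m hm; simp only [Finset.mem_Icc] at hm; omega
      · intro i hi; simp only [Finset.mem_Icc] at hi
        congr 1; push_cast [Nat.cast_sub (by omega : i ≤ j + 1)]; ring
    rw [h1]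
    have : Finset.Icc 1 j = insert j (Finset.Icc 1 (j - 1)) := by
      ext m; simp only [Finset.mem_insert, Finset.mem_Icc]; omega
    rw [this, Finset.prod_insert (by simp only [Finset.mem_Icc]; omega)]
  rw [hnum, hden]
  ring
end

section
/- Let n ≥ 1 and let s be a nonzero complex number with s^{2m} ≠ 1 for all integers m with 1 ≤ m ≤ 2n+1. Set α = s^{2n}. Then Wenzl's quantum dimension of the single-column partition 1^{2n+1} (2n+1 parts equal to 1) equals 1: ⟨1^{2n+1}⟩_{α,s} = 1. -/
open Finset

lemma qintA_pow (s : ℂ) (hs : s ≠ 0) (k : ℕ) (m : ℤ) :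
    qintA (s ^ k) s m = qint s (k + m) := by
  unfold qintA qint
  rw [← zpow_natCast s k, ← zpow_add₀ hs, ← zpow_neg, ← zpow_add₀ hs, neg_add]

lemma qint_ne (s : ℂ) (hs : s ≠ 0) (m : ℤ) (h2 : s ^ (2 * m) ≠ 1) : qint s m ≠ 0 := by
  have hden : s - s⁻¹ ≠ 0 := by
    intro h0
    apply h2
    have h1' : s = s⁻¹ := sub_eq_zero.mp h0
    have hsq : s ^ (2 : ℤ) = 1 := by
      rw [zpow_two]
      nth_rewrite 2 [h1']
      exact mul_inv_cancel₀ hs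
    rw [zpow_mul, hsq, one_zpow]
  have hnum : s ^ m - s ^ (-m) ≠ 0 := by
    intro h0
    apply h2
    have h1' : s ^ m = s ^ (-m) := sub_eq_zero.mp h0
    calc s ^ (2 * m) = s ^ m * s ^ m := by rw [two_mul, zpow_add₀ hs]
    _ = s ^ m * s ^ (-m) := by rw [← h1']
    _ = 1 := by rw [← zpow_add₀ hs]; simp
  exact div_ne_zero hnum hden

lemma qint_zero (s : ℂ) : qint s 0 = 0 := by simp [qint]


/-- For `α = s^{2n}`, the quantum dimension of the single column
`1^{2n+1}` equals `1`. -/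
theorem wenzl_column_odd_orthogonal (n : ℕ) (hn : 1 ≤ n) (s : ℂ) (hs : s ≠ 0)
    (hroot : ∀ m : ℕ, 1 ≤ m → m ≤ 2 * n + 1 → s ^ (2 * m) ≠ 1) :
    wenzl (s ^ (2 * n)) s (colPart (2 * n + 1)) (rowPart (2 * n + 1)) (2 * n + 1) = 1 := by
  -- nonvanishing of qint for 1 ≤ m ≤ 2n+1
  have hq : ∀ m : ℤ, 1 ≤ m → m ≤ 2 * n + 1 → qint s m ≠ 0 := by
    intro m h1 h2
    apply qint_ne s hs
    have hm : (2 * m) = ((2 * m.toNat : ℕ) : ℤ) := by omega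
    rw [hm, zpow_natCast]
    exact hroot m.toNat (by omega) (by omega)
  set lam := colPart (2 * n + 1) with hlam
  set lamV := rowPart (2 * n + 1) with hlamV
  have hcells : cells lam (2 * n + 1) = Finset.Icc 1 (2 * n + 1) ×ˢ {1} := by
    ext ⟨i, j⟩
    simp [cells, hlam, colPart]
    intros
    split_ifs <;> omega
  have hdiag : (cells lam (2 * n + 1)).filter (fun p => p.1 = p.2) = {(1, 1)} := by
    rw [hcells]; ext ⟨i, j⟩
    simp only [Finset.mem_filter, Finset.mem_product, Finset.mem_singleton, Finset.mem_Icc,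
      Prod.mk.injEq]
    omega
  have hoff : (cells lam (2 * n + 1)).filter (fun p => p.1 ≠ p.2) =
      Finset.Icc 2 (2 * n + 1) ×ˢ {1} := by
    rw [hcells]; ext ⟨i, j⟩
    simp only [Finset.mem_filter, Finset.mem_product, Finset.mem_singleton, Finset.mem_Icc, ne_eq]
    omega
  unfold wenzl
  rw [hdiag, hoff, Finset.prod_singleton, Finset.prod_product]
  simp only [Finset.prod_singleton]
  -- diagonal term
  have hl11 : hookl lam lamV (1, 1) = 2 * n + 1 := by
    simp [hookl, hlam, hlamV, colPart, rowPart]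
  have hd11 : ((lam 1 : ℤ) - (lamV 1 : ℤ)) = -(2 * n) := by
    simp [hlam, hlamV, colPart, rowPart]
  have hdiagterm :
      (qintA (s ^ (2 * n)) s ((lam 1 : ℤ) - (lamV 1 : ℤ)) + qint s (hookl lam lamV (1, 1))) /
        qint s (hookl lam lamV (1, 1)) = 1 := by
    rw [hl11, hd11, qintA_pow s hs]
    have : ((2 * n : ℕ) : ℤ) + -(2 * n : ℤ) = 0 := by push_cast; ring
    rw [this, qint_zero, zero_add]
    exact div_self (hq (2 * n + 1) (by omega) (by omega))
  rw [hdiagterm, one_mul]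
  -- off-diagonal product
  have hterm : ∀ i ∈ Finset.Icc 2 (2 * n + 1),
      qintA (s ^ (2 * n)) s (dcell lam lamV (i, 1)) / qint s (hookl lam lamV (i, 1)) =
        qint s ((i : ℤ) - 1) / qint s (2 * n + 2 - (i : ℤ)) := by
    intro i hi
    simp only [Finset.mem_Icc] at hi
    have hd : dcell lam lamV (i, 1) = (i : ℤ) - (2 * n + 1) := by
      simp [dcell, hlam, hlamV, colPart, rowPart]
      split_ifs <;> omega
    have hh : hookl lam lamV (i, 1) = 2 * n + 2 - (i : ℤ) := by
      simp [hookl, hlam, hlamV, colPart, rowPart]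
      split_ifs <;> omega
    rw [hd, hh, qintA_pow s hs]
    congr 2
    push_cast; ring
  rw [Finset.prod_congr rfl hterm, Finset.prod_div_distrib]
  have hP : ∏ i ∈ Finset.Icc 2 (2 * n + 1), qint s ((i : ℤ) - 1) =
      ∏ i ∈ Finset.Icc 2 (2 * n + 1), qint s (2 * n + 2 - (i : ℤ)) := by
    apply Finset.prod_nbij' (fun i => 2 * n + 3 - i) (fun i => 2 * n + 3 - i)
    · intro i hi; simp at hi ⊢; omega
    · intro i hi; simp at hi ⊢; omega
    · intro i hi; simp at hi; omega
    · intro i hi; simp at hi; omega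
    · intro i hi; simp at hi; congr 1; omega
  rw [hP]
  apply div_self
  apply Finset.prod_ne_zero_iff.mpr
  intro i hi
  simp at hi
  exact hq _ (by omega) (by omega)
end

section
/- Let n, k ≥ 1, set l = 2n+2k+2, and let s ∈ ℂ be a primitive 2l-th root of unity. For a partition λ = (λ_1,…,λ_n) with at most n parts define Q(λ) = (−1)^{|λ|} ∏_{j=1}^{n} [2n+2+2λ_j−2j]_s/[2n+2−2j]_s · ∏_{1≤i<j≤n} [2n+2+λ_i−i+λ_j−j]_s·[λ_i−i−λ_j+j]_s / ([2n+2−i−j]_s·[j−i]_s), where [m]_s = s^m − s^{−m}. Then: (a) if λ_1 ≤ k, then Q(λ) ≠ 0; (b) if λ_1 = k+1, then Q(λ) = 0. -/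
open Finset

/-- `[m]_s = s^m - s^{-m}`. -/
noncomputable def br (s : ℂ) (m : ℤ) : ℂ := s ^ m - s ^ (-m)

/-- The quantum dimension `Q(λ)` of the simple object of `C^{n,k}` labelled by the
partition `λ = (λ_1,…,λ_n)` (here `f : Fin n → ℕ` with `f j = λ_{j+1}`):
`Q(λ) = (-1)^{|λ|} ∏_{j=1}^n [2n+2+2λ_j-2j]/[2n+2-2j] ·
∏_{1≤i<j≤n} [2n+2+λ_i-i+λ_j-j]·[λ_i-i-λ_j+j] / ([2n+2-i-j]·[j-i])`. -/
noncomputable def Qdim (s : ℂ) (n : ℕ) (f : Fin n → ℕ) : ℂ :=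
  (-1 : ℂ) ^ (∑ j, f j) *
  (∏ j : Fin n,
    br s (2 * n + 2 + 2 * (f j : ℤ) - 2 * ((j : ℕ) + 1)) /
      br s (2 * n + 2 - 2 * (((j : ℕ) : ℤ) + 1))) *
  ∏ p ∈ (Finset.univ ×ˢ Finset.univ : Finset (Fin n × Fin n)).filter (fun p => p.1 < p.2),
    br s (2 * n + 2 + (f p.1 : ℤ) - ((p.1 : ℕ) + 1) + (f p.2 : ℤ) - ((p.2 : ℕ) + 1)) *
      br s ((f p.1 : ℤ) - ((p.1 : ℕ) + 1) - (f p.2 : ℤ) + ((p.2 : ℕ) + 1)) /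
    (br s (2 * n + 2 - (((p.1 : ℕ) : ℤ) + 1) - (((p.2 : ℕ) : ℤ) + 1)) *
      br s ((((p.2 : ℕ) : ℤ) + 1) - (((p.1 : ℕ) : ℤ) + 1)))

/-- The labelling set `Γ = Γ(C^{n,k})`: partitions with at most `n` parts, each `≤ k`. -/
noncomputable def GammaC (n k : ℕ) : Finset (Fin n → ℕ) :=
  (Finset.Icc 0 (fun _ => k)).filter (fun f => ∀ i j : Fin n, i ≤ j → f j ≤ f i)

lemma br_ne_zero {s : ℂ} {N : ℕ} (hN : 0 < N) (hs : IsPrimitiveRoot s (2 * N))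
    {m : ℤ} (h1 : 0 < m) (h2 : m < N) : s ^ m - s ^ (-m) ≠ 0 := by
  intro h
  have hs0 : s ≠ 0 := hs.ne_zero (by omega)
  rw [sub_eq_zero, zpow_neg] at h
  have h2m : s ^ (2 * m) = 1 := by
    rw [two_mul, zpow_add₀ hs0]
    nth_rewrite 2 [h]
    exact mul_inv_cancel₀ (zpow_ne_zero _ hs0)
  rw [hs.zpow_eq_one_iff_dvd] at h2m
  obtain ⟨c, hc⟩ := h2m
  have hm : m = (N : ℤ) * c := by
    have : (2:ℤ) * m = 2 * ((N:ℤ) * c) := by push_cast at hc ⊢; linarith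
    linarith
  have : (N : ℤ) ∣ m := ⟨c, hm⟩
  have := Int.le_of_dvd h1 this
  omega

lemma br_root_zero {s : ℂ} {N : ℕ} (hN : 0 < N) (hs : IsPrimitiveRoot s (2 * N)) :
    s ^ (N : ℤ) - s ^ (-(N : ℤ)) = 0 := by
  have hs0 : s ≠ 0 := hs.ne_zero (by omega)
  have h1 : s ^ ((N:ℤ)) * s ^ ((N:ℤ)) = 1 := by
    rw [← zpow_add₀ hs0]
    have : (N:ℤ) + (N:ℤ) = ((2*N : ℕ) : ℤ) := by push_cast; ring
    rw [this, zpow_natCast]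
    exact hs.pow_eq_one
  rw [sub_eq_zero, zpow_neg]
  exact (inv_eq_of_mul_eq_one_left h1).symm

/-- For `s` a primitive `2l`-th root of unity, `l = 2n+2k+2`:
(a) if `λ_1 ≤ k` then `Q(λ) ≠ 0`; (b) if `λ_1 = k+1` then `Q(λ) = 0`. -/
theorem Qdim_ne_zero_and_eq_zero (n k : ℕ) (hn : 0 < n) (hk : 1 ≤ k)
    (s : ℂ) (hs : IsPrimitiveRoot s (2 * (2 * n + 2 * k + 2)))
    (f : Fin n → ℕ) (hmono : ∀ i j : Fin n, i ≤ j → f j ≤ f i) :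
    (f ⟨0, hn⟩ ≤ k → Qdim s n f ≠ 0) ∧
    (f ⟨0, hn⟩ = k + 1 → Qdim s n f = 0) := by
  have hN : 0 < 2 * n + 2 * k + 2 := by omega
  constructor
  · intro h0
    have hfk : ∀ j : Fin n, f j ≤ k := fun j =>
      le_trans (hmono ⟨0, hn⟩ j (Fin.le_def.mpr (Nat.zero_le _))) h0
    rw [Qdim]
    refine mul_ne_zero (mul_ne_zero (pow_ne_zero _ (by norm_num)) ?_) ?_
    · rw [Finset.prod_ne_zero_iff]
      intro j _
      have hj : (j : ℕ) < n := j.isLt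
      have := hfk j
      exact div_ne_zero
        (br_ne_zero hN hs (by omega) (by push_cast; omega))
        (br_ne_zero hN hs (by omega) (by push_cast; omega))
    · rw [Finset.prod_ne_zero_iff]
      intro p hp
      have hlt : (p.1 : ℕ) < (p.2 : ℕ) := (Finset.mem_filter.mp hp).2
      have h1 : f p.1 ≤ k := hfk p.1
      have h2 : f p.2 ≤ f p.1 := hmono p.1 p.2 (le_of_lt (Fin.lt_def.mpr hlt))
      have hj2 : (p.2 : ℕ) < n := p.2.isLt
      exact div_ne_zero
        (mul_ne_zero
          (br_ne_zero hN hs (by omega) (by push_cast; omega))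
          (br_ne_zero hN hs (by omega) (by push_cast; omega)))
        (mul_ne_zero
          (br_ne_zero hN hs (by omega) (by push_cast; omega))
          (br_ne_zero hN hs (by omega) (by push_cast; omega)))
  · intro h0
    rw [Qdim]
    have hz : br s (2 * n + 2 + 2 * (f ⟨0, hn⟩ : ℤ) - 2 * (((⟨0, hn⟩ : Fin n) : ℕ) + 1)) = 0 := by
      have harg : (2 * n + 2 + 2 * (f ⟨0, hn⟩ : ℤ) - 2 * (((⟨0, hn⟩ : Fin n) : ℕ) + 1))
          = ((2 * n + 2 * k + 2 : ℕ) : ℤ) := by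
        rw [h0]; push_cast; ring
      rw [br, harg]
      exact br_root_zero hN hs
    rw [Finset.prod_eq_zero (Finset.mem_univ (⟨0, hn⟩ : Fin n)) (by rw [hz, zero_div]),
      mul_zero, zero_mul]
end

section
/- Let n, k ≥ 1, set l = 2n+2k+2, let s ∈ ℂ be a primitive 2l-th root of unity, and let g ≥ 1 be an integer. For a partition λ = (λ_1,…,λ_n) with at most n parts define Q(λ) = (−1)^{|λ|} ∏_{j=1}^{n} [2n+2+2λ_j−2j]_s/[2n+2−2j]_s · ∏_{1≤i<j≤n} [2n+2+λ_i−i+λ_j−j]_s·[λ_i−i−λ_j+j]_s / ([2n+2−i−j]_s·[j−i]_s), where [m]_s = s^m − s^{−m}. Let Γ = {partitions λ with λ_1 ≤ k and at most n parts}. Then (∑_{λ∈Γ} Q(λ)²)^{g−1} · ∑_{λ∈Γ} Q(λ)^{2(1−g)} = (−(2n+2k+2))^{n(g−1)} · ∑_{n+k ≥ l_1 > l_2 > … > l_n > 0} ( ∏_{j=1}^{n} [2l_j]_s · ∏_{1≤i<j≤n} [l_i+l_j]_s·[l_i−l_j]_s )^{2(1−g)}, where the sum on the right runs over all strictly decreasing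 n-tuples of integers (l_1,…,l_n) with n+k ≥ l_1 and l_n > 0, and negative integer powers denote inverses in ℂ (all quantities raised to negative powers are nonzero). -/
open Finset

/-- The index set of strictly decreasing tuples `n+k ≥ l_1 > l_2 > … > l_n > 0`
(with `t j = l_{j+1}`). -/
noncomputable def Tuples (n k : ℕ) : Finset (Fin n → ℕ) :=
  (Finset.Icc 0 (fun _ => n + k)).filter
    (fun t => (∀ i j : Fin n, i < j → t j < t i) ∧ ∀ i, 0 < t i)

/-- `∏_{j=1}^n [2l_j]_s · ∏_{1≤i<j≤n} [l_i+l_j]_s [l_i-l_j]_s`. -/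
noncomputable def Pprod (s : ℂ) (n : ℕ) (t : Fin n → ℕ) : ℂ :=
  (∏ j : Fin n, br s (2 * (t j : ℤ))) *
  ∏ p ∈ (Finset.univ ×ˢ Finset.univ : Finset (Fin n × Fin n)).filter (fun p => p.1 < p.2),
    br s ((t p.1 : ℤ) + (t p.2 : ℤ)) * br s ((t p.1 : ℤ) - (t p.2 : ℤ))

open Polynomial

namespace VAux


lemma br_neg (s : ℂ) (m : ℤ) : br s (-m) = - br s m := by
  simp only [br, neg_neg]; ring

lemma br_ne_zero {L : ℕ} {s : ℂ} (hs : IsPrimitiveRoot s (2 * L)) (hL : 0 < L)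
    {m : ℤ} (h1 : 0 < m) (h2 : m < L) : br s m ≠ 0 := by
  have hs0 : s ≠ 0 := hs.ne_zero (by positivity)
  intro h
  simp only [br, sub_eq_zero] at h
  have h2m : s ^ (2 * m) = 1 := by
    rw [two_mul, zpow_add₀ hs0]
    nth_rewrite 2 [h]
    rw [← zpow_add₀ hs0]
    simp
  have hd : ((2 * L : ℕ) : ℤ) ∣ 2 * m := (hs.zpow_eq_one_iff_dvd _).mp h2m
  have hd' : (L : ℤ) ∣ m := by
    push_cast at hd
    exact (mul_dvd_mul_iff_left (two_ne_zero)).mp hd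
  have := Int.le_of_dvd h1 hd'
  omega

-- the character
noncomputable def ee (s : ℂ) (L : ℕ) (x : ZMod L) : ℂ := (s ^ 2) ^ x.val

variable {L : ℕ} {s : ℂ}

lemma prim2 (hs : IsPrimitiveRoot s (2 * L)) (hL : 0 < L) :
    IsPrimitiveRoot (s ^ 2) L := by
  have := hs.pow_of_dvd (p := 2) (by norm_num) ⟨L, rfl⟩
  simpa using this

lemma pow_mod (hz : (s ^ 2) ^ L = 1) (a : ℕ) : (s ^ 2) ^ (a % L) = (s ^ 2) ^ a := by
  conv_rhs => rw [← Nat.div_add_mod a L]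
  rw [pow_add, pow_mul, hz, one_pow, one_mul]

lemma ee_add [NeZero L] (hz : (s ^ 2) ^ L = 1) (x y : ZMod L) :
    ee s L (x + y) = ee s L x * ee s L y := by
  rw [ee, ee, ee, ZMod.val_add, pow_mod hz, pow_add]

lemma ee_zero : ee s L 0 = 1 := by
  simp [ee]

lemma ee_intCast [NeZero L] (hs0 : s ≠ 0) (hz : (s ^ 2) ^ L = 1) (m : ℤ) :
    ee s L ((m : ZMod L)) = s ^ (2 * m) := by
  have hdvd : (L : ℤ) ∣ (m - ((m : ZMod L)).val) := by
    rw [← ZMod.intCast_zmod_eq_zero_iff_dvd]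
    push_cast
    rw [ZMod.natCast_val, ZMod.cast_id]
    ring
  obtain ⟨c, hc⟩ := hdvd
  have hm : m = ((m : ZMod L)).val + (L : ℤ) * c := by omega
  have hz' : (s ^ 2) ^ (L : ℤ) = 1 := by exact_mod_cast hz
  have hsq : ∀ a : ℤ, (s ^ 2) ^ a = s ^ (2 * a) := by
    intro a
    rw [← zpow_natCast s 2, ← zpow_mul]
    norm_num
  have hs20 : (s ^ 2) ≠ 0 := pow_ne_zero _ hs0
  calc ee s L ((m : ZMod L)) = (s ^ 2) ^ ((((m : ZMod L)).val : ℤ)) := by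
        rw [ee, zpow_natCast]
    _ = (s ^ 2) ^ m := by
        rw [hm, add_comm, zpow_add₀ hs20, zpow_mul, hz']
        simp
    _ = s ^ (2 * m) := hsq m


variable {L : ℕ} {s : ℂ}
lemma ee_add' {L : ℕ} {s : ℂ} [NeZero L] (hz : (s ^ 2) ^ L = 1) (x y : ZMod L) :
    ee s L (x + y) = ee s L x * ee s L y := ee_add hz x y

section Orth
variable [NeZero L] (hz : (s ^ 2) ^ L = 1) (hprim : IsPrimitiveRoot (s ^ 2) L)

lemma sum_zmod (f : ZMod L → ℂ) :
    ∑ x : ZMod L, f x = ∑ i ∈ range L, f (i : ZMod L) := by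
  refine Finset.sum_nbij' (fun x => x.val) (fun i => (i : ZMod L)) ?_ ?_ ?_ ?_ ?_ <;> intros
  · exact mem_range.mpr (ZMod.val_lt _)
  · exact mem_univ _
  · simp [ZMod.natCast_val, ZMod.cast_id]
  · exact ZMod.val_cast_of_lt (mem_range.mp (by assumption))
  · simp

include hz hprim in
lemma ee_orth (c : ZMod L) :
    ∑ x : ZMod L, ee s L (c * x) = if c = 0 then (L : ℂ) else 0 := by
  by_cases hc : c = 0
  · simp [hc, ee, ZMod.card]
  · rw [if_neg hc]
    have hgeom : ∀ i : ℕ, ee s L (c * (i : ZMod L)) = (ee s L c) ^ i := by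
      intro i
      induction i with
      | zero => simp [ee]
      | succ i ih =>
          push_cast
          rw [mul_add, mul_one, ee_add' hz, ih, pow_succ]
    have hne : ee s L c ≠ 1 := by
      have hv0 : 0 < c.val := Nat.pos_of_ne_zero (fun h => hc ((ZMod.val_eq_zero c).mp h))
      exact hprim.pow_ne_one_of_pos_of_lt hv0.ne' (ZMod.val_lt c)
    have hL1 : (ee s L c) ^ L = 1 := by
      rw [ee, ← pow_mul, mul_comm, pow_mul, hz, one_pow]
    rw [sum_zmod]
    simp only [hgeom]
    rw [geom_sum_eq hne, hL1, sub_self, zero_div]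

-- column function
noncomputable def fcol (s : ℂ) (L : ℕ) (c : ZMod L) (x : ZMod L) : ℂ :=
  ee s L (c * x) - ee s L (-(c * x))

include hz hprim in
lemma fcol_orth (c d : ZMod L) (hcd : c + d ≠ 0) :
    ∑ x : ZMod L, fcol s L c x * fcol s L d x = if c = d then (-2 : ℂ) * L else 0 := by
  have expand : ∀ x : ZMod L, fcol s L c x * fcol s L d x =
      (ee s L ((c + d) * x) + ee s L ((-(c + d)) * x))
        - (ee s L ((c - d) * x) + ee s L ((d - c) * x)) := by
    intro x
    simp only [fcol]
    have h1 : ee s L (c * x) * ee s L (d * x) = ee s L ((c + d) * x) := by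
      rw [← ee_add' hz, add_mul]
    have h2 : ee s L (-(c * x)) * ee s L (-(d * x)) = ee s L ((-(c + d)) * x) := by
      rw [← ee_add' hz]; ring_nf
    have h3 : ee s L (c * x) * ee s L (-(d * x)) = ee s L ((c - d) * x) := by
      rw [← ee_add' hz]; ring_nf
    have h4 : ee s L (-(c * x)) * ee s L (d * x) = ee s L ((d - c) * x) := by
      rw [← ee_add' hz]; ring_nf
    calc (ee s L (c * x) - ee s L (-(c * x))) * (ee s L (d * x) - ee s L (-(d * x)))
        = ee s L (c * x) * ee s L (d * x) + ee s L (-(c * x)) * ee s L (-(d * x))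
          - (ee s L (c * x) * ee s L (-(d * x)) + ee s L (-(c * x)) * ee s L (d * x)) := by ring
      _ = _ := by rw [h1, h2, h3, h4]
  simp only [expand]
  rw [Finset.sum_sub_distrib, Finset.sum_add_distrib, Finset.sum_add_distrib,
    ee_orth hz hprim, ee_orth hz hprim, ee_orth hz hprim, ee_orth hz hprim]
  rw [if_neg hcd, if_neg (fun h => hcd (neg_eq_zero.mp h))]
  by_cases hcd2 : c = d
  · rw [if_pos (by rw [hcd2, sub_self]), if_pos (by rw [hcd2, sub_self]), if_pos hcd2]
    ring
  · rw [if_neg (fun h => hcd2 (sub_eq_zero.mp h)),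
      if_neg (fun h => hcd2 (sub_eq_zero.mp h).symm), if_neg hcd2]
    ring

end Orth


noncomputable def cheb : ℕ → Polynomial ℂ
  | 0 => 1
  | 1 => Polynomial.X
  | (m + 2) => Polynomial.X * cheb (m + 1) - cheb m

lemma cheb_monic_deg : ∀ m : ℕ, (cheb m).Monic ∧ (cheb m).natDegree = m := by
  intro m
  induction m using Nat.strong_induction_on with
  | _ m ih =>
    match m with
    | 0 => exact ⟨monic_one, natDegree_one⟩
    | 1 => exact ⟨monic_X, natDegree_X⟩
    | (m + 2) =>
      obtain ⟨h1m, h1d⟩ := ih (m + 1) (by omega)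
      obtain ⟨h0m, h0d⟩ := ih m (by omega)
      have hm : (Polynomial.X * cheb (m + 1)).Monic := monic_X.mul h1m
      have hd : (Polynomial.X * cheb (m + 1)).natDegree = m + 2 := by
        rw [natDegree_mul X_ne_zero h1m.ne_zero, natDegree_X, h1d]; omega
      have hlt : (cheb m).degree < (Polynomial.X * cheb (m + 1)).degree := by
        rw [Polynomial.degree_eq_natDegree hm.ne_zero, hd]
        calc (cheb m).degree ≤ ((cheb m).natDegree : WithBot ℕ) := degree_le_natDegree
          _ < ((m + 2 : ℕ) : WithBot ℕ) := by
              rw [h0d]; exact_mod_cast (by omega : m < m + 2)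
      constructor
      · show (Polynomial.X * cheb (m+1) - cheb m).Monic
        exact hm.sub_of_left hlt
      · show (Polynomial.X * cheb (m+1) - cheb m).natDegree = m + 2
        rw [← hd]
        apply natDegree_sub_eq_left_of_natDegree_lt
        rw [h0d, hd]; omega

lemma cheb_eval (w : ℂ) (hw : w ≠ 0) :
    ∀ m : ℕ, (w - w⁻¹) * (cheb m).eval (w + w⁻¹) = w ^ (m + 1) - w⁻¹ ^ (m + 1) := by
  intro m
  induction m using Nat.strong_induction_on with
  | _ m ih =>
    match m with
    | 0 => simp [cheb]
    | 1 => simp only [cheb, eval_X]; ring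
    | (m + 2) =>
      have ih1 := ih (m + 1) (by omega)
      have ih0 := ih m (by omega)
      show (w - w⁻¹) * (Polynomial.X * cheb (m+1) - cheb m).eval (w + w⁻¹) = _
      rw [eval_sub, eval_mul, eval_X]
      have hc := mul_inv_cancel₀ hw
      linear_combination (w + w⁻¹) * ih1 - ih0 + (w ^ (m + 1) - w⁻¹ ^ (m + 1)) * hc

lemma prod_pairs {n : ℕ} (F : Fin n × Fin n → ℂ) :
    ∏ p ∈ (Finset.univ ×ˢ Finset.univ : Finset (Fin n × Fin n)).filter (fun p => p.1 < p.2), F p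
      = ∏ i : Fin n, ∏ j ∈ Ioi i, F (i, j) := by
  rw [Finset.prod_filter, Finset.prod_product]
  refine Finset.prod_congr rfl fun i _ => ?_
  have hIoi : Ioi i = Finset.univ.filter (fun j => i < j) := by ext; simp
  rw [hIoi, Finset.prod_filter]

lemma det_pow_sub {n : ℕ} (w : Fin n → ℂ) (hw : ∀ i, w i ≠ 0) :
    Matrix.det (Matrix.of fun i j : Fin n => w i ^ ((j : ℕ) + 1) - (w i)⁻¹ ^ ((j : ℕ) + 1)) =
    (∏ i, (w i - (w i)⁻¹)) *
      ∏ p ∈ (Finset.univ ×ˢ Finset.univ : Finset (Fin n × Fin n)).filter (fun p => p.1 < p.2),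
        ((w p.2 + (w p.2)⁻¹) - (w p.1 + (w p.1)⁻¹)) := by
  set B := Matrix.of fun i j : Fin n => (cheb (j : ℕ)).eval (w i + (w i)⁻¹) with hB
  have hentry : (Matrix.of fun i j : Fin n => w i ^ ((j : ℕ) + 1) - (w i)⁻¹ ^ ((j : ℕ) + 1))
      = Matrix.of fun i j : Fin n => (w i - (w i)⁻¹) * B i j := by
    ext i j
    simp only [Matrix.of_apply, hB]
    rw [cheb_eval (w i) (hw i)]
  have hvd := Matrix.det_eval_matrixOfPolynomials_eq_det_vandermonde
    (fun i => w i + (w i)⁻¹) (fun j => cheb (j : ℕ)) (fun j => (cheb_monic_deg (j : ℕ)).2)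
    (fun j => (cheb_monic_deg (j : ℕ)).1)
  rw [hentry, Matrix.det_mul_column, ← hvd, Matrix.det_vandermonde, prod_pairs]


end VAux

namespace VAux

section Bridge
variable {L n : ℕ} {s : ℂ}

lemma pprod_sq {n : ℕ} (hs0 : s ≠ 0) (t : Fin n → ℕ) :
    Pprod s n t ^ 2 =
    (Matrix.det (Matrix.of fun i j : Fin n =>
      br s (2 * ((j : ℕ) + 1) * (t i : ℤ)))) ^ 2 := by
  set w : Fin n → ℂ := fun i => s ^ (2 * (t i : ℤ)) with hw
  have hw0 : ∀ i, w i ≠ 0 := fun i => zpow_ne_zero _ hs0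
  have hpow : ∀ (i : Fin n) (c : ℕ), w i ^ c = s ^ ((2 * (t i : ℤ)) * c) := by
    intro i c
    rw [hw, ← zpow_natCast (s ^ (2 * (t i : ℤ))) c, ← zpow_mul]
  have hentry : ∀ (i j : Fin n), br s (2 * ((j : ℕ) + 1) * (t i : ℤ)) =
      w i ^ ((j : ℕ) + 1) - (w i)⁻¹ ^ ((j : ℕ) + 1) := by
    intro i j
    rw [inv_pow, hpow, ← zpow_neg, br]
    congr 2 <;> push_cast <;> ring
  have hM : (Matrix.of fun i j : Fin n => br s (2 * ((j : ℕ) + 1) * (t i : ℤ)))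
      = Matrix.of fun i j : Fin n => w i ^ ((j : ℕ) + 1) - (w i)⁻¹ ^ ((j : ℕ) + 1) := by
    ext i j; exact hentry i j
  rw [hM, det_pow_sub w hw0]
  -- now rewrite Pprod
  have hbr2 : ∀ j : Fin n, br s (2 * (t j : ℤ)) = w j - (w j)⁻¹ := by
    intro j; rw [br, hw, ← zpow_neg]
  have hbrp : ∀ p : Fin n × Fin n,
      br s ((t p.1 : ℤ) + (t p.2 : ℤ)) * br s ((t p.1 : ℤ) - (t p.2 : ℤ)) =
      (w p.1 + (w p.1)⁻¹) - (w p.2 + (w p.2)⁻¹) := by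
    intro p
    have hx0 : s ^ ((t p.1 : ℤ)) ≠ 0 := zpow_ne_zero _ hs0
    have hy0 : s ^ ((t p.2 : ℤ)) ≠ 0 := zpow_ne_zero _ hs0
    have h2 : ∀ i, w i = s ^ ((t i : ℤ)) * s ^ ((t i : ℤ)) := by
      intro i; rw [hw]; rw [← zpow_add₀ hs0]; congr 1; ring
    rw [h2, h2]
    simp only [br, zpow_neg, zpow_add₀ hs0, zpow_sub₀ hs0]
    field_simp
    ring
  have hP : Pprod s n t = (∏ i, (w i - (w i)⁻¹)) *
      ∏ p ∈ (Finset.univ ×ˢ Finset.univ : Finset (Fin n × Fin n)).filter (fun p => p.1 < p.2),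
        ((w p.1 + (w p.1)⁻¹) - (w p.2 + (w p.2)⁻¹)) := by
    rw [Pprod]
    congr 1
    · exact Finset.prod_congr rfl fun j _ => hbr2 j
    · exact Finset.prod_congr rfl fun p _ => hbrp p
  rw [hP]
  have hneg : ∏ p ∈ (Finset.univ ×ˢ Finset.univ : Finset (Fin n × Fin n)).filter
        (fun p => p.1 < p.2), ((w p.1 + (w p.1)⁻¹) - (w p.2 + (w p.2)⁻¹))
      = (-1 : ℂ) ^ ((Finset.univ ×ˢ Finset.univ : Finset (Fin n × Fin n)).filter
        (fun p => p.1 < p.2)).card *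
        ∏ p ∈ (Finset.univ ×ˢ Finset.univ : Finset (Fin n × Fin n)).filter
        (fun p => p.1 < p.2), ((w p.2 + (w p.2)⁻¹) - (w p.1 + (w p.1)⁻¹)) := by
    rw [← Finset.prod_const, ← Finset.prod_mul_distrib]
    exact Finset.prod_congr rfl fun p _ => by ring
  rw [hneg]
  rw [mul_pow, mul_pow, ← pow_mul, mul_comm _ 2, pow_mul]
  norm_num
  rw [mul_pow]

end Bridge
end VAux

namespace VAux

section DD
variable {L n : ℕ} {s : ℂ} [NeZero L]

noncomputable def ddet (s : ℂ) (L n : ℕ) (t : Fin n → ZMod L) : ℂ :=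
  Matrix.det (Matrix.of fun i j : Fin n => fcol s L ((((j : ℕ) + 1 : ℕ)) : ZMod L) (t i))

lemma fcol_natCast (hs0 : s ≠ 0) (hz : (s ^ 2) ^ L = 1) (a : ℕ) (m : ℤ) :
    fcol s L ((a : ZMod L)) ((m : ZMod L)) = br s (2 * ((a : ℤ) * m)) := by
  rw [fcol]
  have h2 : -(((a : ZMod L)) * ((m : ZMod L))) = (((-((a : ℤ) * m) : ℤ)) : ZMod L) := by
    push_cast; ring
  have h1 : ((a : ZMod L)) * ((m : ZMod L)) = (((a : ℤ) * m : ℤ) : ZMod L) := by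
    push_cast; ring
  rw [h2, h1, ee_intCast hs0 hz, ee_intCast hs0 hz, br]
  ring_nf
lemma det_br_eq_ddet (hs0 : s ≠ 0) (hz : (s ^ 2) ^ L = 1) (t : Fin n → ℕ) :
    Matrix.det (Matrix.of fun i j : Fin n => br s (2 * ((j : ℕ) + 1) * (t i : ℤ)))
      = ddet s L n (fun i => ((t i : ℕ) : ZMod L)) := by
  rw [ddet]
  congr 1
  ext i j
  have h := fcol_natCast (L := L) hs0 hz ((j : ℕ) + 1) ((t i : ℕ) : ℤ)
  simp only [Matrix.of_apply]
  rw [show (((t i : ℕ)) : ZMod L) = ((((t i : ℕ) : ℤ)) : ZMod L) by push_cast; rfl,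
    show ((((j : ℕ) + 1 : ℕ)) : ZMod L) = ((((j : ℕ) + 1 : ℕ) : ℕ) : ZMod L) by norm_cast]
  rw [h]
  congr 1
  push_cast
  ring

lemma natCast_ne_zero_zmod {a : ℕ} (ha0 : 0 < a) (haL : a < L) : (a : ZMod L) ≠ 0 := by
  intro h
  rw [ZMod.natCast_eq_zero_iff] at h
  have := Nat.le_of_dvd ha0 h
  omega

lemma sum_all_dd_sq (hz : (s ^ 2) ^ L = 1)
    (hprim : IsPrimitiveRoot (s ^ 2) L) (hnL : 2 * n + 2 < L) :
    ∑ t : Fin n → ZMod L, ddet s L n t ^ 2 =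
      (Nat.factorial n : ℂ) * ((-2 : ℂ) * L) ^ n := by
  classical
  set c : Equiv.Perm (Fin n) → Fin n → ZMod L :=
    fun σ i => ((((σ i : ℕ) + 1 : ℕ)) : ZMod L) with hc
  set g : Equiv.Perm (Fin n) → Equiv.Perm (Fin n) → Fin n → ZMod L → ℂ :=
    fun σ τ i x => fcol s L (c σ i) x * fcol s L (c τ i) x with hg
  set sgn : Equiv.Perm (Fin n) → ℂ := fun σ => ((Equiv.Perm.sign σ : ℤ) : ℂ) with hsgn
  have hdet : ∀ t : Fin n → ZMod L, ddet s L n t =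
      ∑ σ : Equiv.Perm (Fin n), sgn σ * ∏ i, fcol s L (c σ i) (t i) := by
    intro t
    rw [ddet, ← Matrix.det_transpose, Matrix.det_apply']
    simp only [Matrix.transpose_apply, Matrix.of_apply, hsgn, hc]
  have key : ∀ σ τ : Equiv.Perm (Fin n),
      (∑ t : Fin n → ZMod L, ∏ i, g σ τ i (t i))
      = if σ = τ then ((-2 : ℂ) * L) ^ n else 0 := by
    intro σ τ
    rw [← Fintype.piFinset_univ, Finset.sum_prod_piFinset]
    have horth : ∀ i : Fin n,
        (∑ x : ZMod L, g σ τ i x) = if σ i = τ i then (-2 : ℂ) * L else 0 := by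
      intro i
      rw [hg]
      rw [fcol_orth hz hprim _ _ ?hsum]
      case hsum =>
        rw [hc]
        rw [show ((((σ i : ℕ) + 1 : ℕ)) : ZMod L) + ((((τ i : ℕ) + 1 : ℕ)) : ZMod L)
            = ((((σ i : ℕ) + 1 + ((τ i : ℕ) + 1) : ℕ)) : ZMod L) by push_cast; ring]
        exact natCast_ne_zero_zmod (by omega)
          (by have := (σ i).isLt; have := (τ i).isLt; omega)
      congr 1
      simp only [hc]
      rw [eq_iff_iff]
      constructor
      · intro h
        have h1 : (((σ i : ℕ) + 1 : ℕ) : ZMod L).val = (((τ i : ℕ) + 1 : ℕ) : ZMod L).val := by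
          rw [h]
        rw [ZMod.val_cast_of_lt (by have := (σ i).isLt; omega),
          ZMod.val_cast_of_lt (by have := (τ i).isLt; omega)] at h1
        exact Fin.ext (by omega)
      · intro h; rw [h]
    rw [Finset.prod_congr rfl fun i _ => horth i]
    by_cases h : σ = τ
    · subst h
      simp
    · rw [if_neg h]
      obtain ⟨i, hi⟩ : ∃ i, σ i ≠ τ i := by
        by_contra hc'; push_neg at hc'; exact h (Equiv.ext hc')
      exact Finset.prod_eq_zero (mem_univ i) (if_neg hi)
  calc ∑ t : Fin n → ZMod L, ddet s L n t ^ 2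
      = ∑ t : Fin n → ZMod L, ∑ σ : Equiv.Perm (Fin n), ∑ τ : Equiv.Perm (Fin n),
          (sgn σ * ∏ i, fcol s L (c σ i) (t i)) * (sgn τ * ∏ i, fcol s L (c τ i) (t i)) := by
        refine Finset.sum_congr rfl fun t _ => ?_
        rw [pow_two, hdet t, Finset.sum_mul_sum]
    _ = ∑ σ : Equiv.Perm (Fin n), ∑ τ : Equiv.Perm (Fin n), ∑ t : Fin n → ZMod L,
          (sgn σ * ∏ i, fcol s L (c σ i) (t i)) * (sgn τ * ∏ i, fcol s L (c τ i) (t i)) := by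
        rw [Finset.sum_comm]
        exact Finset.sum_congr rfl fun σ _ => Finset.sum_comm
    _ = ∑ σ : Equiv.Perm (Fin n), ∑ τ : Equiv.Perm (Fin n),
          sgn σ * sgn τ * ∑ t : Fin n → ZMod L, ∏ i, g σ τ i (t i) := by
        refine Finset.sum_congr rfl fun σ _ => Finset.sum_congr rfl fun τ _ => ?_
        rw [Finset.mul_sum]
        refine Finset.sum_congr rfl fun t _ => ?_
        rw [hg]
        simp only []
        rw [Finset.prod_mul_distrib]
        ring
    _ = ∑ σ : Equiv.Perm (Fin n), ∑ τ : Equiv.Perm (Fin n),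
          if σ = τ then sgn σ * sgn τ * ((-2 : ℂ) * L) ^ n else 0 := by
        refine Finset.sum_congr rfl fun σ _ => Finset.sum_congr rfl fun τ _ => ?_
        rw [key σ τ]
        by_cases h : σ = τ
        · rw [if_pos h, if_pos h]
        · rw [if_neg h, if_neg h, mul_zero]
    _ = ∑ σ : Equiv.Perm (Fin n), sgn σ * sgn σ * ((-2 : ℂ) * L) ^ n := by
        refine Finset.sum_congr rfl fun σ _ => ?_
        rw [Finset.sum_ite_eq Finset.univ σ
          (fun τ => sgn σ * sgn τ * ((-2 : ℂ) * L) ^ n), if_pos (mem_univ σ)]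
    _ = ∑ _σ : Equiv.Perm (Fin n), ((-2 : ℂ) * L) ^ n := by
        refine Finset.sum_congr rfl fun σ _ => ?_
        have : sgn σ * sgn σ = 1 := by
          simp only [hsgn]
          rcases Int.units_eq_one_or (Equiv.Perm.sign σ) with h | h <;> rw [h] <;> norm_num
        rw [this, one_mul]
    _ = (Nat.factorial n : ℂ) * ((-2 : ℂ) * L) ^ n := by
        rw [Finset.sum_const, Finset.card_univ, Fintype.card_perm, Fintype.card_fin,
          nsmul_eq_mul]

end DD
end VAux

namespace VAux

section Helpers
variable {L n k : ℕ} {s : ℂ} [NeZero L]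

lemma fcol_neg (c x : ZMod L) : fcol s L c (-x) = - fcol s L c x := by
  rw [fcol, fcol, mul_neg, neg_neg]
  ring

lemma cast_eq_cast_iff {a b : ℕ} (ha : a < L) (hb : b < L) :
    ((a : ZMod L) = (b : ZMod L)) ↔ a = b := by
  constructor
  · intro h
    have := congrArg ZMod.val h
    rwa [ZMod.val_cast_of_lt ha, ZMod.val_cast_of_lt hb] at this
  · intro h; rw [h]

lemma cast_ne_neg {a b : ℕ} (ha0 : 0 < a) (hb0 : 0 < b) (hab : a + b < L) :
    (a : ZMod L) ≠ -(b : ZMod L) := by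
  intro h
  have h2 : ((a + b : ℕ) : ZMod L) = 0 := by push_cast; rw [h]; ring
  rw [ZMod.natCast_eq_zero_iff] at h2
  have := Nat.le_of_dvd (by omega) h2
  omega

lemma mem_tuples_iff {t : Fin n → ℕ} :
    t ∈ Tuples n k ↔ (∀ i, t i ≤ n + k) ∧ (∀ i j : Fin n, i < j → t j < t i) ∧ (∀ i, 0 < t i) := by
  rw [Tuples, Finset.mem_filter, Finset.mem_Icc]
  constructor
  · rintro ⟨⟨-, h1⟩, h2, h3⟩
    exact ⟨fun i => h1 i, h2, h3⟩
  · rintro ⟨h1, h2, h3⟩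
    exact ⟨⟨fun i => Nat.zero_le _, fun i => h1 i⟩, h2, h3⟩

lemma strictanti_inj {t : Fin n → ℕ} (hd : ∀ i j : Fin n, i < j → t j < t i) :
    Function.Injective t := by
  intro i j h
  rcases lt_trichotomy i j with hlt | heq | hgt
  · exact absurd h (by have := hd i j hlt; omega)
  · exact heq
  · exact absurd h (by have := hd j i hgt; omega)

lemma strictanti_eq_of_perm {t t' : Fin n → ℕ}
    (hd : ∀ i j : Fin n, i < j → t j < t i) (hd' : ∀ i j : Fin n, i < j → t' j < t' i)
    (σ σ' : Equiv.Perm (Fin n)) (h : ∀ i, t (σ i) = t' (σ' i)) : t = t' := by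
  classical
  have himg : Finset.image t Finset.univ = Finset.image t' Finset.univ := by
    ext x
    simp only [Finset.mem_image]
    constructor
    · rintro ⟨i, -, rfl⟩
      exact ⟨σ' (σ.symm i), Finset.mem_univ _, by rw [← h (σ.symm i), Equiv.apply_symm_apply]⟩
    · rintro ⟨i, -, rfl⟩
      exact ⟨σ (σ'.symm i), Finset.mem_univ _, by rw [h (σ'.symm i), Equiv.apply_symm_apply]⟩
  have hcard : (Finset.image t Finset.univ).card = n := by
    rw [Finset.card_image_of_injective _ (strictanti_inj hd), Finset.card_univ,
      Fintype.card_fin]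
  have hmono : StrictMono (fun j : Fin n => t j.rev) := by
    intro i j hij
    exact hd j.rev i.rev (by rwa [Fin.rev_lt_rev])
  have hmono' : StrictMono (fun j : Fin n => t' j.rev) := by
    intro i j hij
    exact hd' j.rev i.rev (by rwa [Fin.rev_lt_rev])
  have h1 : (fun j : Fin n => t j.rev) = (Finset.image t Finset.univ).orderEmbOfFin hcard :=
    Finset.orderEmbOfFin_unique hcard
      (fun x => Finset.mem_image.mpr ⟨x.rev, Finset.mem_univ _, rfl⟩) hmono
  have hcard' : (Finset.image t Finset.univ).card = n := hcard
  have h2 : (fun j : Fin n => t' j.rev) = (Finset.image t Finset.univ).orderEmbOfFin hcard := by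
    refine Finset.orderEmbOfFin_unique hcard
      (fun x => ?_) hmono'
    rw [himg]
    exact Finset.mem_image.mpr ⟨x.rev, Finset.mem_univ _, rfl⟩
  funext j
  have := congrFun (h1.trans h2.symm) j.rev
  simpa [Fin.rev_rev] using this

lemma ddet_psi_sq (σ : Equiv.Perm (Fin n)) (ε : Fin n → Bool) (w : Fin n → ZMod L) :
    ddet s L n (fun i => (if ε i then (1 : ZMod L) else -1) * w (σ i)) ^ 2
      = ddet s L n w ^ 2 := by
  classical
  set N := Matrix.of fun i j : Fin n => fcol s L ((((j : ℕ) + 1 : ℕ)) : ZMod L) (w i) with hN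
  have hM : (Matrix.of fun i j : Fin n =>
        fcol s L ((((j : ℕ) + 1 : ℕ)) : ZMod L) ((if ε i then (1 : ZMod L) else -1) * w (σ i)))
      = Matrix.of fun i j => (if ε i then (1 : ℂ) else -1) * N (σ i) j := by
    ext i j
    by_cases h : ε i
    · simp [h, hN]
    · simp only [h, Bool.false_eq_true, if_false, hN, Matrix.of_apply, neg_one_mul, fcol_neg]
  have hperm : Matrix.det (fun i j : Fin n => N (σ i) j)
      = ((Equiv.Perm.sign σ : ℤ) : ℂ) * N.det := by
    have h0 := Matrix.det_permute σ N
    exact h0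
  rw [ddet, hM]
  have hmc : (Matrix.of fun i j => (if ε i then (1 : ℂ) else -1) * N (σ i) j).det
      = (∏ i : Fin n, if ε i then (1 : ℂ) else -1) * Matrix.det (fun i j : Fin n => N (σ i) j) :=
    Matrix.det_mul_column _ _
  rw [hmc, hperm, ddet, ← hN]
  rw [mul_pow, mul_pow]
  have e1 : (∏ i : Fin n, if ε i then (1 : ℂ) else -1) ^ 2 = 1 := by
    rw [← Finset.prod_pow]
    have hh : ∀ i : Fin n, (if ε i then (1 : ℂ) else -1) ^ 2 = 1 := by
      intro i; by_cases h : ε i <;> simp [h]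
    rw [Finset.prod_congr rfl fun i _ => hh i, Finset.prod_const_one]
  have e2 : ((Equiv.Perm.sign σ : ℤ) : ℂ) ^ 2 = 1 := by
    rcases Int.units_eq_one_or (Equiv.Perm.sign σ) with h | h <;> rw [h] <;> norm_num
  rw [e1, e2, one_mul, one_mul]

end Helpers
end VAux

namespace VAux

section Orbit
variable {L n k : ℕ} {s : ℂ} [NeZero L]

lemma ddet_zero_self {u : Fin n → ZMod L} (i : Fin n) (h : u i = - u i) :
    ddet s L n u = 0 := by
  rw [ddet]
  apply Matrix.det_eq_zero_of_row_eq_zero i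
  intro j
  simp only [Matrix.of_apply, fcol]
  rw [show -(((((j : ℕ) + 1 : ℕ)) : ZMod L) * u i) = ((((j : ℕ) + 1 : ℕ)) : ZMod L) * u i by
    rw [← mul_neg, ← h]]
  exact sub_self _

lemma ddet_zero_eq {u : Fin n → ZMod L} {i j : Fin n} (hij : i ≠ j) (h : u i = u j) :
    ddet s L n u = 0 := by
  rw [ddet]
  apply Matrix.det_zero_of_row_eq hij
  funext c
  simp only [Matrix.of_apply, h]

lemma ddet_zero_neg {u : Fin n → ZMod L} {i j : Fin n} (hij : i ≠ j) (h : u i = - u j) :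
    ddet s L n u = 0 := by
  classical
  rw [ddet]
  set M := Matrix.of fun i' j' : Fin n => fcol s L ((((j' : ℕ) + 1 : ℕ)) : ZMod L) (u i') with hMdef
  have hrow : M i = (-1 : ℂ) • M j := by
    funext c
    simp only [hMdef, Matrix.of_apply, Pi.smul_apply, smul_eq_mul, neg_one_mul, h, fcol_neg]
  have hupdate : M = M.updateRow i ((-1 : ℂ) • M j) := by
    funext a b
    by_cases hai : a = i
    · subst hai
      rw [Matrix.updateRow_self, ← hrow]
    · rw [Matrix.updateRow_ne hai]
  rw [hupdate, Matrix.det_updateRow_smul]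
  have : (M.updateRow i (M j)).det = 0 := by
    apply Matrix.det_zero_of_row_eq hij
    rw [Matrix.updateRow_self, Matrix.updateRow_ne (Ne.symm hij)]
  rw [this, mul_zero]

lemma sum_all_eq_tuples (hn : 1 ≤ n) (hL : L = 2 * n + 2 * k + 2) :
    ∑ t : Fin n → ZMod L, ddet s L n t ^ 2
      = (Nat.factorial n : ℂ) * 2 ^ n *
        ∑ t ∈ Tuples n k, ddet s L n (fun i => ((t i : ℕ) : ZMod L)) ^ 2 := by
  classical
  set Ψ : (Equiv.Perm (Fin n) × ((Fin n → Bool) × (Fin n → ℕ))) → (Fin n → ZMod L) :=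
    fun x => fun i => (if x.2.1 i then (1 : ZMod L) else -1) * ((x.2.2 (x.1 i) : ℕ) : ZMod L)
    with hΨ
  set X : Finset (Equiv.Perm (Fin n) × ((Fin n → Bool) × (Fin n → ℕ))) :=
    Finset.univ ×ˢ (Finset.univ ×ˢ Tuples n k) with hX
  -- vanishing off the image
  have hvanish : ∀ u : Fin n → ZMod L, u ∉ X.image Ψ → ddet s L n u = 0 := by
    intro u hu
    by_contra hdd
    have h1 : ∀ i, u i ≠ - u i := fun i h => hdd (ddet_zero_self i h)
    have h2 : ∀ i j, i ≠ j → u i ≠ u j := fun i j hij h => hdd (ddet_zero_eq hij h)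
    have h3 : ∀ i j, i ≠ j → u i ≠ - u j := fun i j hij h => hdd (ddet_zero_neg hij h)
    set v : Fin n → ℕ := fun i => (u i).val with hv
    have hcastv : ∀ i, ((v i : ℕ) : ZMod L) = u i := fun i => by
      rw [hv]; rw [ZMod.natCast_val, ZMod.cast_id]
    have hv1 : ∀ i, 0 < v i := by
      intro i
      rcases Nat.eq_zero_or_pos (v i) with h | h
      · exfalso
        apply h1 i
        have : u i = 0 := by rw [← hcastv i, h]; simp
        rw [this]; simp
      · exact h
    have hvL : ∀ i, v i < L := fun i => ZMod.val_lt (u i)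
    have hvhalf : ∀ i, v i ≠ n + k + 1 := by
      intro i hhalf
      apply h1 i
      have hadd : u i + u i = 0 := by
        rw [← hcastv i, ← Nat.cast_add, hhalf, show (n + k + 1) + (n + k + 1) = L by omega,
          ZMod.natCast_self]
      exact eq_neg_of_add_eq_zero_left hadd
    set a : Fin n → ℕ := fun i => if v i ≤ n + k then v i else L - v i with ha
    have ha1 : ∀ i, 1 ≤ a i ∧ a i ≤ n + k := by
      intro i
      have := hv1 i; have := hvL i; have := hvhalf i
      rw [ha]
      dsimp only
      split <;> omega
    have hacast : ∀ i, ¬ (v i ≤ n + k) → ((a i : ℕ) : ZMod L) = - u i := by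
      intro i hcase
      rw [ha]
      simp only [hcase, if_false]
      rw [Nat.cast_sub (le_of_lt (hvL i)), ZMod.natCast_self, hcastv i, zero_sub]
    have hacast' : ∀ i, (v i ≤ n + k) → ((a i : ℕ) : ZMod L) = u i := by
      intro i hcase
      rw [ha]
      simp only [hcase, if_true]
      exact hcastv i
    have hainj : Function.Injective a := by
      intro i j hij
      by_contra hne
      have hc : ((a i : ℕ) : ZMod L) = ((a j : ℕ) : ZMod L) := by rw [hij]
      by_cases hi : v i ≤ n + k <;> by_cases hj : v j ≤ n + k
      · rw [hacast' i hi, hacast' j hj] at hc; exact h2 i j hne hc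
      · rw [hacast' i hi, hacast j hj] at hc; exact h3 i j hne hc
      · rw [hacast i hi, hacast' j hj] at hc
        exact h3 j i (Ne.symm hne) hc.symm
      · rw [hacast i hi, hacast j hj] at hc; exact h2 i j hne (neg_inj.mp hc)
    set V := Finset.image a Finset.univ with hV
    have hVcard : V.card = n := by
      rw [hV, Finset.card_image_of_injective _ hainj, Finset.card_univ, Fintype.card_fin]
    set tt : Fin n → ℕ := fun j => (V.orderEmbOfFin hVcard) j.rev with htt
    have httdec : ∀ i j : Fin n, i < j → tt j < tt i := by
      intro i j hij
      rw [htt]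
      exact (V.orderEmbOfFin hVcard).strictMono (by rwa [Fin.rev_lt_rev])
    have httbound : ∀ j, 1 ≤ tt j ∧ tt j ≤ n + k := by
      intro j
      have hmem : tt j ∈ V := by rw [htt]; exact Finset.orderEmbOfFin_mem V hVcard j.rev
      rw [hV] at hmem
      obtain ⟨i, -, hi⟩ := Finset.mem_image.mp hmem
      rw [← hi]; exact ha1 i
    have httmem : tt ∈ Tuples n k := by
      rw [mem_tuples_iff]
      exact ⟨fun i => (httbound i).2, httdec, fun i => (httbound i).1⟩
    have hexist : ∀ i, ∃ j, tt j = a i := by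
      intro i
      have hmem : a i ∈ Set.range (V.orderEmbOfFin hVcard) := by
        rw [Finset.range_orderEmbOfFin]
        exact Finset.mem_coe.mpr (Finset.mem_image.mpr ⟨i, Finset.mem_univ _, rfl⟩)
      obtain ⟨j0, hj0⟩ := hmem
      exact ⟨j0.rev, by simp only [htt, Fin.rev_rev]; exact hj0⟩
    choose σ0 hσ0 using hexist
    have hσinj : Function.Injective σ0 := by
      intro i j h
      apply hainj
      rw [← hσ0 i, ← hσ0 j, h]
    have hσbij : Function.Bijective σ0 := Finite.injective_iff_bijective.mp hσinj
    set σ : Equiv.Perm (Fin n) := Equiv.ofBijective σ0 hσbij with hσ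
    set ε : Fin n → Bool := fun i => decide (v i ≤ n + k) with hε
    apply hu
    refine Finset.mem_image.mpr ⟨(σ, (ε, tt)), ?_, ?_⟩
    · rw [hX]
      rw [Finset.mem_product, Finset.mem_product]
      exact ⟨Finset.mem_univ _, Finset.mem_univ _, httmem⟩
    · funext i
      simp only [hΨ]
      have hco : σ i = σ0 i := rfl
      rw [hco, hσ0 i]
      by_cases hcase : v i ≤ n + k
      · have hb : ε i = true := by simp [hε, hcase]
        simp only [hb, if_true, one_mul]
        exact hacast' i hcase
      · have hb : ε i = false := by simp [hε, hcase]
        simp only [hb, Bool.false_eq_true, if_false]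
        rw [hacast i hcase]
        ring
  -- injectivity
  have hinj : ∀ x ∈ X, ∀ y ∈ X, Ψ x = Ψ y → x = y := by
    rintro ⟨σ, ε, t⟩ hx ⟨σ', ε', t'⟩ hy hxy
    rw [hX, Finset.mem_product, Finset.mem_product] at hx hy
    obtain ⟨-, -, ht⟩ := hx
    obtain ⟨-, -, ht'⟩ := hy
    rw [mem_tuples_iff] at ht ht'
    obtain ⟨htb, htd, htp⟩ := ht
    obtain ⟨htb', htd', htp'⟩ := ht'
    dsimp only at htb htd htp htb' htd' htp'
    have hLbig : 2 * (n + k) < L := by omega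
    have hkey : ∀ i, ε i = ε' i ∧ t (σ i) = t' (σ' i) := by
      intro i
      have h := congrFun hxy i
      simp only [hΨ] at h
      have hbi : t (σ i) < L := by have := htb (σ i); omega
      have hbj : t' (σ' i) < L := by have := htb' (σ' i); omega
      cases hε : ε i <;> cases hε' : ε' i <;>
        simp only [hε, hε', Bool.false_eq_true, if_true, if_false, one_mul, neg_one_mul] at h
      · refine ⟨rfl, ?_⟩
        have := neg_inj.mp h
        exact (cast_eq_cast_iff hbi hbj).mp this
      · exfalso
        have hne := cast_ne_neg (L := L) (htp' (σ' i)) (htp (σ i))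
          (by have := htb' (σ' i); have := htb (σ i); omega)
        exact hne h.symm
      · exfalso
        have hne := cast_ne_neg (L := L) (htp (σ i)) (htp' (σ' i))
          (by have := htb' (σ' i); have := htb (σ i); omega)
        exact hne h
      · exact ⟨rfl, (cast_eq_cast_iff hbi hbj).mp h⟩
    have hεeq : ε = ε' := funext fun i => (hkey i).1
    have hteq : t = t' := strictanti_eq_of_perm htd htd' σ σ' (fun i => (hkey i).2)
    have hσeq : σ = σ' := by
      apply Equiv.ext
      intro i
      apply strictanti_inj htd
      rw [(hkey i).2, hteq]
    rw [hεeq, hteq, hσeq]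
  calc ∑ t : Fin n → ZMod L, ddet s L n t ^ 2
      = ∑ u ∈ X.image Ψ, ddet s L n u ^ 2 := by
        refine (Finset.sum_subset (Finset.subset_univ _) ?_).symm
        intro u _ hu
        rw [hvanish u hu]
        norm_num
    _ = ∑ x ∈ X, ddet s L n (Ψ x) ^ 2 := Finset.sum_image hinj
    _ = ∑ x ∈ X, ddet s L n (fun i => ((x.2.2 i : ℕ) : ZMod L)) ^ 2 := by
        refine Finset.sum_congr rfl fun x hx => ?_
        exact ddet_psi_sq x.1 x.2.1 (fun i => ((x.2.2 i : ℕ) : ZMod L))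
    _ = (Nat.factorial n : ℂ) * 2 ^ n *
        ∑ t ∈ Tuples n k, ddet s L n (fun i => ((t i : ℕ) : ZMod L)) ^ 2 := by
        rw [hX, Finset.sum_product]
        have hsp : ∀ x : Equiv.Perm (Fin n),
            ∑ y ∈ (Finset.univ ×ˢ Tuples n k : Finset ((Fin n → Bool) × (Fin n → ℕ))),
              (ddet s L n fun i => (((x, y).2.2 i : ℕ) : ZMod L)) ^ 2
            = ∑ ε : Fin n → Bool, ∑ t ∈ Tuples n k,
              (ddet s L n fun i => ((t i : ℕ) : ZMod L)) ^ 2 := by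
          intro x
          rw [Finset.sum_product]
        rw [Finset.sum_congr rfl fun x _ => hsp x]
        rw [Finset.sum_const, Finset.sum_const, Finset.card_univ, Finset.card_univ,
          Fintype.card_perm, Fintype.card_fin, Fintype.card_fun, Fintype.card_bool,
          Fintype.card_fin, nsmul_eq_mul, nsmul_eq_mul]
        push_cast
        ring

end Orbit
end VAux

namespace VAux

section Gamma
variable {L n k : ℕ} {s : ℂ}

lemma tuples_gap {t : Fin n → ℕ} (hd : ∀ i j : Fin n, i < j → t j < t i) :
    ∀ i j : Fin n, i ≤ j → t j + (j : ℕ) ≤ t i + (i : ℕ) := by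
  have key : ∀ d : ℕ, ∀ i j : Fin n, (j : ℕ) = (i : ℕ) + d → t j + (j : ℕ) ≤ t i + (i : ℕ) := by
    intro d
    induction d with
    | zero =>
        intro i j h
        have : i = j := Fin.ext (by omega)
        subst this
        exact le_refl _
    | succ d ih =>
        intro i j h
        have hlt : (i : ℕ) + d < n := by have := j.isLt; omega
        have h1 := ih i ⟨(i : ℕ) + d, hlt⟩ rfl
        have h2 : t j < t ⟨(i : ℕ) + d, hlt⟩ := hd ⟨(i : ℕ) + d, hlt⟩ j (by
          rw [Fin.lt_def]; simp; omega)
        simp only [] at h1 h2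
        omega
  intro i j hij
  exact key ((j : ℕ) - (i : ℕ)) i j (by have : (i : ℕ) ≤ (j : ℕ) := hij; omega)

lemma tuples_lower (hn : 1 ≤ n) {t : Fin n → ℕ} (hd : ∀ i j : Fin n, i < j → t j < t i)
    (hp : ∀ i, 0 < t i) : ∀ j : Fin n, n ≤ t j + (j : ℕ) := by
  intro j
  have hlast : (n - 1 : ℕ) < n := by omega
  have h1 := tuples_gap hd j ⟨n - 1, hlast⟩ (by rw [Fin.le_def]; simp; have := j.isLt; omega)
  have h2 := hp ⟨n - 1, hlast⟩
  simp only [] at h1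
  have := j.isLt
  omega

lemma tuples_upper {t : Fin n → ℕ} (hn : 1 ≤ n) (hd : ∀ i j : Fin n, i < j → t j < t i)
    (hb : ∀ i, t i ≤ n + k) : ∀ j : Fin n, t j + (j : ℕ) ≤ n + k := by
  intro j
  have h0 : (0 : ℕ) < n := hn
  have h1 := tuples_gap hd ⟨0, h0⟩ j (by rw [Fin.le_def]; simp)
  have h2 := hb ⟨0, h0⟩
  simp only [] at h1
  omega

lemma mem_gamma_iff {f : Fin n → ℕ} :
    f ∈ GammaC n k ↔ (∀ i, f i ≤ k) ∧ ∀ i j : Fin n, i ≤ j → f j ≤ f i := by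
  rw [GammaC, Finset.mem_filter, Finset.mem_Icc]
  constructor
  · rintro ⟨⟨-, h1⟩, h2⟩
    exact ⟨fun i => h1 i, h2⟩
  · rintro ⟨h1, h2⟩
    exact ⟨⟨fun i => Nat.zero_le _, fun i => h1 i⟩, h2⟩

/-- the map Γ → Tuples -/
def FF (n : ℕ) (f : Fin n → ℕ) : Fin n → ℕ := fun j => f j + (n - (j : ℕ))

/-- the inverse map Tuples → Γ -/
def GG (n : ℕ) (t : Fin n → ℕ) : Fin n → ℕ := fun j => t j - (n - (j : ℕ))

lemma FF_mem (hn : 1 ≤ n) {f : Fin n → ℕ} (hf : f ∈ GammaC n k) : FF n f ∈ Tuples n k := by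
  rw [mem_gamma_iff] at hf
  obtain ⟨hb, hmono⟩ := hf
  rw [mem_tuples_iff]
  refine ⟨fun i => ?_, fun i j hij => ?_, fun i => ?_⟩
  · have := hb i; have := i.isLt; simp only [FF]; omega
  · have h1 := hmono i j (le_of_lt hij)
    have h2 : (i : ℕ) < (j : ℕ) := hij
    have := j.isLt
    simp only [FF]
    omega
  · have := i.isLt; simp only [FF]; omega

lemma GG_mem (hn : 1 ≤ n) {t : Fin n → ℕ} (ht : t ∈ Tuples n k) : GG n t ∈ GammaC n k := by
  rw [mem_tuples_iff] at ht
  obtain ⟨hb, hd, hp⟩ := ht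
  rw [mem_gamma_iff]
  constructor
  · intro i
    have h1 := tuples_upper hn hd hb i
    have := i.isLt
    simp only [GG]
    omega
  · intro i j hij
    have h1 := tuples_gap hd i j hij
    have h2 := tuples_lower hn hd hp j
    have h3 := tuples_lower hn hd hp i
    have := j.isLt
    have h4 : (i : ℕ) ≤ (j : ℕ) := hij
    simp only [GG]
    omega

lemma GG_FF {f : Fin n → ℕ} : GG n (FF n f) = f := by
  funext j
  simp only [GG, FF]
  omega

lemma FF_GG (hn : 1 ≤ n) {t : Fin n → ℕ} (ht : t ∈ Tuples n k) : FF n (GG n t) = t := by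
  rw [mem_tuples_iff] at ht
  obtain ⟨hb, hd, hp⟩ := ht
  funext j
  have h2 := tuples_lower hn hd hp j
  have := j.isLt
  simp only [GG, FF]
  omega

end Gamma
end VAux

namespace VAux

section Assemble
variable {n k : ℕ} {s : ℂ}

def tzero (n : ℕ) : Fin n → ℕ := fun j => n - (j : ℕ)

lemma tzero_mem (hn : 1 ≤ n) : tzero n ∈ Tuples n k := by
  rw [mem_tuples_iff]
  refine ⟨fun i => ?_, fun i j hij => ?_, fun i => ?_⟩
  · simp only [tzero]; omega
  · have h : (i : ℕ) < (j : ℕ) := hij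
    have := j.isLt
    simp only [tzero]; omega
  · have := i.isLt; simp only [tzero]; omega

lemma pprod_ne_zero {L : ℕ} (hs : IsPrimitiveRoot s (2 * L)) (hL : L = 2 * n + 2 * k + 2)
    {t : Fin n → ℕ} (ht : t ∈ Tuples n k) : Pprod s n t ≠ 0 := by
  rw [mem_tuples_iff] at ht
  obtain ⟨hb, hd, hp⟩ := ht
  have hLpos : 0 < L := by omega
  rw [Pprod]
  apply mul_ne_zero
  · rw [Finset.prod_ne_zero_iff]
    intro j _
    refine br_ne_zero hs hLpos ?_ ?_
    · have := hp j; omega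
    · have := hb j; omega
  · rw [Finset.prod_ne_zero_iff]
    intro p hp2
    have hlt : p.1 < p.2 := (Finset.mem_filter.mp hp2).2
    have h1 := hd p.1 p.2 hlt
    have h2 := hp p.2
    have h3 := hb p.1
    have h4 := hb p.2
    apply mul_ne_zero
    · refine br_ne_zero hs hLpos (by omega) (by omega)
    · refine br_ne_zero hs hLpos (by omega) (by omega)

lemma qdim_eq (f : Fin n → ℕ) :
    Qdim s n f = (-1 : ℂ) ^ (∑ j, f j) *
      (Pprod s n (FF n f) / Pprod s n (tzero n)) := by
  rw [Qdim, Pprod, Pprod]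
  have hA : ∀ j : Fin n, br s (2 * n + 2 + 2 * (f j : ℤ) - 2 * ((j : ℕ) + 1))
      = br s (2 * ((FF n f j : ℕ) : ℤ)) := by
    intro j; congr 1; have := j.isLt; simp only [FF]; omega
  have hB : ∀ j : Fin n, br s (2 * n + 2 - 2 * (((j : ℕ) : ℤ) + 1))
      = br s (2 * ((tzero n j : ℕ) : ℤ)) := by
    intro j; congr 1; have := j.isLt; simp only [tzero]; omega
  have hC : ∀ p : Fin n × Fin n, p.1 < p.2 →
      br s (2 * n + 2 + (f p.1 : ℤ) - ((p.1 : ℕ) + 1) + (f p.2 : ℤ) - ((p.2 : ℕ) + 1))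
      = br s ((FF n f p.1 : ℤ) + (FF n f p.2 : ℤ)) := by
    intro p _; congr 1
    have := p.1.isLt; have := p.2.isLt
    simp only [FF]; omega
  have hD : ∀ p : Fin n × Fin n, p.1 < p.2 →
      br s ((f p.1 : ℤ) - ((p.1 : ℕ) + 1) - (f p.2 : ℤ) + ((p.2 : ℕ) + 1))
      = br s ((FF n f p.1 : ℤ) - (FF n f p.2 : ℤ)) := by
    intro p _; congr 1
    have := p.1.isLt; have := p.2.isLt
    simp only [FF]; omega
  have hE : ∀ p : Fin n × Fin n, p.1 < p.2 →
      br s (2 * n + 2 - (((p.1 : ℕ) : ℤ) + 1) - (((p.2 : ℕ) : ℤ) + 1))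
      = br s ((tzero n p.1 : ℤ) + (tzero n p.2 : ℤ)) := by
    intro p _; congr 1
    have := p.1.isLt; have := p.2.isLt
    simp only [tzero]; omega
  have hG : ∀ p : Fin n × Fin n, p.1 < p.2 →
      br s ((((p.2 : ℕ) : ℤ) + 1) - (((p.1 : ℕ) : ℤ) + 1))
      = br s ((tzero n p.1 : ℤ) - (tzero n p.2 : ℤ)) := by
    intro p _; congr 1
    have := p.1.isLt; have := p.2.isLt
    simp only [tzero]; omega
  have h1 : (∏ j : Fin n,
        br s (2 * n + 2 + 2 * (f j : ℤ) - 2 * ((j : ℕ) + 1)) /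
          br s (2 * n + 2 - 2 * (((j : ℕ) : ℤ) + 1)))
      = (∏ j : Fin n, br s (2 * ((FF n f j : ℕ) : ℤ))) /
          (∏ j : Fin n, br s (2 * ((tzero n j : ℕ) : ℤ))) := by
    rw [← Finset.prod_div_distrib]
    exact Finset.prod_congr rfl fun j _ => by rw [hA j, hB j]
  have h2 : (∏ p ∈ (Finset.univ ×ˢ Finset.univ : Finset (Fin n × Fin n)).filter
        (fun p => p.1 < p.2),
        br s (2 * n + 2 + (f p.1 : ℤ) - ((p.1 : ℕ) + 1) + (f p.2 : ℤ) - ((p.2 : ℕ) + 1)) *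
          br s ((f p.1 : ℤ) - ((p.1 : ℕ) + 1) - (f p.2 : ℤ) + ((p.2 : ℕ) + 1)) /
        (br s (2 * n + 2 - (((p.1 : ℕ) : ℤ) + 1) - (((p.2 : ℕ) : ℤ) + 1)) *
          br s ((((p.2 : ℕ) : ℤ) + 1) - (((p.1 : ℕ) : ℤ) + 1))))
      = (∏ p ∈ (Finset.univ ×ˢ Finset.univ : Finset (Fin n × Fin n)).filter
          (fun p => p.1 < p.2),
          br s ((FF n f p.1 : ℤ) + (FF n f p.2 : ℤ)) *
            br s ((FF n f p.1 : ℤ) - (FF n f p.2 : ℤ))) /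
        (∏ p ∈ (Finset.univ ×ˢ Finset.univ : Finset (Fin n × Fin n)).filter
          (fun p => p.1 < p.2),
          br s ((tzero n p.1 : ℤ) + (tzero n p.2 : ℤ)) *
            br s ((tzero n p.1 : ℤ) - (tzero n p.2 : ℤ))) := by
    rw [← Finset.prod_div_distrib]
    refine Finset.prod_congr rfl fun p hp => ?_
    have hlt := (Finset.mem_filter.mp hp).2
    rw [hC p hlt, hD p hlt, hE p hlt, hG p hlt]
  rw [h1, h2, mul_assoc, div_mul_div_comm]

lemma sum_gamma_tuples (hn : 1 ≤ n) (φ : (Fin n → ℕ) → ℂ) :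
    ∑ f ∈ GammaC n k, φ (FF n f) = ∑ t ∈ Tuples n k, φ t := by
  refine Finset.sum_nbij' (FF n) (GG n) ?_ ?_ ?_ ?_ ?_
  · intro f hf; exact FF_mem hn hf
  · intro t ht; exact GG_mem hn ht
  · intro f _; exact GG_FF
  · intro t ht; exact FF_GG hn ht
  · intro f _; rfl

end Assemble
end VAux


open VAux in
/-- The genus-`g` Verlinde formula for the modular category
`C^{n,k}` (`l = 2n+2k+2`, `s` a primitive `2l`-th root of unity):
`(∑_{λ∈Γ} Q(λ)²)^{g-1} ∑_{λ∈Γ} Q(λ)^{2(1-g)}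
 = (-(2n+2k+2))^{n(g-1)} ∑_{n+k ≥ l_1 > … > l_n > 0}
   (∏_j [2l_j] ∏_{i<j} [l_i+l_j][l_i-l_j])^{2(1-g)}`. -/
theorem verlinde_C (n k : ℕ) (hn : 1 ≤ n) (hk : 1 ≤ k)
    (s : ℂ) (hs : IsPrimitiveRoot s (2 * (2 * n + 2 * k + 2)))
    (g : ℕ) (hg : 1 ≤ g) :
    (∑ f ∈ GammaC n k, Qdim s n f ^ 2) ^ ((g : ℤ) - 1) *
      ∑ f ∈ GammaC n k, Qdim s n f ^ (2 * (1 - (g : ℤ))) =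
    (-((2 * n + 2 * k + 2 : ℕ) : ℂ)) ^ ((n : ℤ) * ((g : ℤ) - 1)) *
      ∑ t ∈ Tuples n k, Pprod s n t ^ (2 * (1 - (g : ℤ))) := by
  classical
  set L : ℕ := 2 * n + 2 * k + 2 with hLdef
  haveI : NeZero L := ⟨by omega⟩
  have hs0 : s ≠ 0 := hs.ne_zero (by positivity)
  have hprim : IsPrimitiveRoot (s ^ 2) L := prim2 hs (by omega)
  have hz : (s ^ 2) ^ L = 1 := hprim.pow_eq_one
  set D : ℂ := Pprod s n (tzero n) with hDdef
  have hD0 : D ≠ 0 := pprod_ne_zero hs hLdef (tzero_mem hn)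
  have hPne : ∀ t ∈ Tuples n k, Pprod s n t ≠ 0 := fun t ht => pprod_ne_zero hs hLdef ht
  -- the Gauss sum
  have hPdd : ∀ t : Fin n → ℕ,
      Pprod s n t ^ 2 = ddet s L n (fun i => ((t i : ℕ) : ZMod L)) ^ 2 := by
    intro t
    rw [pprod_sq hs0 t, det_br_eq_ddet hs0 hz]
  have hA : ∑ t ∈ Tuples n k, Pprod s n t ^ 2 = (-1 : ℂ) ^ n * (L : ℂ) ^ n := by
    have h1 := sum_all_eq_tuples (L := L) (s := s) (k := k) hn hLdef
    have h2 := sum_all_dd_sq (L := L) (n := n) (s := s) hz hprim (by omega)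
    have h3 : (Nat.factorial n : ℂ) * 2 ^ n *
        ∑ t ∈ Tuples n k, Pprod s n t ^ 2
        = (Nat.factorial n : ℂ) * 2 ^ n *
          ∑ t ∈ Tuples n k, ddet s L n (fun i => ((t i : ℕ) : ZMod L)) ^ 2 := by
      rw [Finset.sum_congr rfl fun t _ => hPdd t]
    have hne : (Nat.factorial n : ℂ) * 2 ^ n ≠ 0 := by
      apply mul_ne_zero
      · exact_mod_cast Nat.cast_ne_zero.mpr (Nat.factorial_ne_zero n)
      · exact pow_ne_zero _ two_ne_zero
    apply mul_left_cancel₀ hne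
    rw [h3, ← h1, h2]
    rw [show (-2 : ℂ) * (L : ℂ) = (-1) * (2 * (L : ℂ)) by ring, mul_pow, mul_pow]
    ring
  -- relating Qdim and Pprod
  have hQsq : ∀ f : Fin n → ℕ,
      Qdim s n f ^ 2 = Pprod s n (FF n f) ^ 2 / D ^ 2 := by
    intro f
    rw [qdim_eq f, mul_pow, div_pow, ← pow_mul, mul_comm (∑ j, f j) 2, pow_mul]
    norm_num
    rfl
  have hsum1 : ∑ f ∈ GammaC n k, Qdim s n f ^ 2
      = ((-1 : ℂ) ^ n * (L : ℂ) ^ n) / D ^ 2 := by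
    rw [Finset.sum_congr rfl fun f _ => hQsq f, ← Finset.sum_div,
      sum_gamma_tuples hn (fun t => Pprod s n t ^ 2), hA]
  have hzp : ∀ x : ℂ, x ^ (2 * (1 - (g : ℤ))) = (x ^ 2) ^ (1 - (g : ℤ)) := by
    intro x
    rw [← zpow_natCast x 2, ← zpow_mul]
    norm_num
  have hsum2 : ∑ f ∈ GammaC n k, Qdim s n f ^ (2 * (1 - (g : ℤ)))
      = ∑ t ∈ Tuples n k, (Pprod s n t ^ 2 / D ^ 2) ^ (1 - (g : ℤ)) := by
    rw [Finset.sum_congr rfl fun f _ => by rw [hzp, hQsq f]]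
    exact sum_gamma_tuples hn (fun t => (Pprod s n t ^ 2 / D ^ 2) ^ (1 - (g : ℤ)))
  rw [hsum1, hsum2]
  have hstep : ∀ t ∈ Tuples n k,
      (Pprod s n t ^ 2 / D ^ 2) ^ (1 - (g : ℤ))
        = Pprod s n t ^ (2 * (1 - (g : ℤ))) * ((D ^ 2) ^ ((g : ℤ) - 1)) := by
    intro t ht
    rw [div_zpow, ← hzp, show (1 - (g : ℤ)) = -((g : ℤ) - 1) by ring, zpow_neg,
      div_eq_mul_inv, inv_inv]
  rw [Finset.sum_congr rfl hstep, ← Finset.sum_mul]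
  have hD2 : ((D ^ 2) ^ ((g : ℤ) - 1)) ≠ 0 := zpow_ne_zero _ (pow_ne_zero 2 hD0)
  rw [div_zpow]
  have hcoef : (-((L : ℕ) : ℂ)) ^ ((n : ℤ) * ((g : ℤ) - 1))
      = ((-1 : ℂ) ^ n * (L : ℂ) ^ n) ^ ((g : ℤ) - 1) := by
    rw [zpow_mul, zpow_natCast]
    congr 1
    rw [show (-((L : ℕ) : ℂ)) = (-1) * ((L : ℕ) : ℂ) by ring, mul_pow]
  rw [hcoef]
  field_simp
end
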